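/- arXiv:2002.04565 — 4 statements merged into one kernel-verified Lean document; each statement's English description precedes it below -/
import Mathlib

section
/- Let N ≥ 2, 1 ≤ k ≤ N−1, and let f : ℝ → ℝ satisfy: there exists δ > 0 such that f is C¹ and nondecreasing on (−δ, δ), f(u) > 0 for all u ∈ (0, δ), and f(0) = 0. Then for every α ∈ (0, δ) there exists a positive, bounded, radial C² function u_α : ℝ^N → ℝ with u_α(0) = α, 0 < u_α(x) ≤ α for all x, u_α(x) → 0 as |x| → ∞, and P⁻_k(D²u_α(x)) + f(u_α(x)) = 0 for every x ∈ ℝ^N. In particular, the equation P⁻_k(D²u) + f(u) = 0 in ℝ^N admits infinitely many positive bounded radial classical solutions. -/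
/-- The truncated Laplacian `P⁻ₖ(X)`: the sum of the `k` smallest eigenvalues of the
symmetric matrix `X`, expressed via the Ky Fan variational principle as the infimum of
`∑ᵢ ⟨X vᵢ, vᵢ⟩` over orthonormal families `v₁, …, v_k`. -/
noncomputable def truncLap {N : ℕ} (k : ℕ) (X : Matrix (Fin N) (Fin N) ℝ) : ℝ :=
  sInf { s : ℝ | ∃ v : Fin k → (Fin N → ℝ),
    (∀ i j, dotProduct (v i) (v j) = if i = j then (1 : ℝ) else 0) ∧
    s = ∑ i, dotProduct (X.mulVec (v i)) (v i) }

/-- The Hessian matrix of `φ : ℝ^N → ℝ` at `x`. -/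
noncomputable def hess {N : ℕ} (φ : EuclideanSpace ℝ (Fin N) → ℝ)
    (x : EuclideanSpace ℝ (Fin N)) : Matrix (Fin N) (Fin N) ℝ :=
  fun i j => iteratedFDeriv ℝ 2 φ x ![EuclideanSpace.single i 1, EuclideanSpace.single j 1]

/-- `u` is a viscosity subsolution of `P⁻ₖ(D²u) + f(u) = 0` in `ℝ^N`. -/
def IsViscSubsol {N : ℕ} (k : ℕ) (f : ℝ → ℝ) (u : EuclideanSpace ℝ (Fin N) → ℝ) : Prop :=
  ∀ φ : EuclideanSpace ℝ (Fin N) → ℝ, ContDiff ℝ 2 φ →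
    ∀ x₀, IsLocalMax (fun x => u x - φ x) x₀ →
      0 ≤ truncLap k (hess φ x₀) + f (u x₀)

/-- `u` is a viscosity supersolution of `P⁻ₖ(D²u) + f(u) = 0` in `ℝ^N`. -/
def IsViscSupersol {N : ℕ} (k : ℕ) (f : ℝ → ℝ) (u : EuclideanSpace ℝ (Fin N) → ℝ) : Prop :=
  ∀ φ : EuclideanSpace ℝ (Fin N) → ℝ, ContDiff ℝ 2 φ →
    ∀ x₀, IsLocalMin (fun x => u x - φ x) x₀ →
      truncLap k (hess φ x₀) + f (u x₀) ≤ 0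


section Aux

open Set Filter MeasureTheory intervalIntegral


lemma dot_quad {N : ℕ} (a b : ℝ) (x w : Fin N → ℝ) (X : Matrix (Fin N) (Fin N) ℝ)
    (hX : ∀ i j, X i j = b * x i * x j + if i = j then a else 0) :
    dotProduct (X.mulVec w) w
      = b * (dotProduct x w)^2 + a * dotProduct w w := by
  classical
  have hrow : ∀ i, X.mulVec w i = b * x i * dotProduct x w + a * w i := by
    intro i
    have h0 : X.mulVec w i = ∑ j, X i j * w j := rfl
    rw [h0]
    simp only [hX, add_mul, ite_mul, zero_mul]
    rw [Finset.sum_add_distrib]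
    congr 1
    · rw [dotProduct, Finset.mul_sum]
      apply Finset.sum_congr rfl
      intro j _
      ring
    · simp [Finset.sum_ite_eq]
  calc dotProduct (X.mulVec w) w
      = ∑ i, (b * x i * dotProduct x w + a * w i) * w i := by
        apply Finset.sum_congr rfl
        intro i _
        rw [hrow]
  _ = b * dotProduct x w * (∑ i, x i * w i) + a * ∑ i, w i * w i := by
        rw [Finset.mul_sum, Finset.mul_sum, ← Finset.sum_add_distrib]
        apply Finset.sum_congr rfl
        intro i _
        ring
  _ = b * (dotProduct x w)^2 + a * dotProduct w w := by
        simp only [dotProduct]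
        ring

lemma dotProduct_eq_inner {N : ℕ} (u w : Fin N → ℝ) :
    dotProduct u w =
      (inner ℝ ((WithLp.equiv 2 (Fin N → ℝ)).symm u) ((WithLp.equiv 2 (Fin N → ℝ)).symm w) : ℝ) := by
  simp [dotProduct, PiLp.inner_apply, RCLike.inner_apply, mul_comm]

lemma truncLap_eval {N k : ℕ} (hk2 : k + 1 ≤ N) (a b : ℝ) (hb : 0 ≤ b) (x : Fin N → ℝ) :
    truncLap k (fun i j => b * x i * x j + if i = j then a else 0) = (k:ℝ) * a := by
  classical
  set X : Matrix (Fin N) (Fin N) ℝ := fun i j => b * x i * x j + if i = j then a else 0 with hXdef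
  have hX : ∀ i j, X i j = b * x i * x j + if i = j then a else 0 := fun i j => rfl
  set S := { s : ℝ | ∃ v : Fin k → (Fin N → ℝ),
    (∀ i j, dotProduct (v i) (v j) = if i = j then (1 : ℝ) else 0) ∧
    s = ∑ i, dotProduct (X.mulVec (v i)) (v i) } with hS
  set E := EuclideanSpace ℝ (Fin N)
  set xE : E := (WithLp.equiv 2 (Fin N → ℝ)).symm x with hxE
  set W : Submodule ℝ E := (Submodule.span ℝ ({xE} : Set E))ᗮ with hW
  have hrank : k ≤ Module.finrank ℝ W := by
    have h1 : Module.finrank ℝ (Submodule.span ℝ ({xE} : Set E)) + Module.finrank ℝ W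
        = Module.finrank ℝ E := (Submodule.span ℝ ({xE} : Set E)).finrank_add_finrank_orthogonal
    have h2 : Module.finrank ℝ E = N := finrank_euclideanSpace_fin
    have h3 : Module.finrank ℝ (Submodule.span ℝ ({xE} : Set E)) ≤ 1 := by
      have := finrank_span_le_card (R := ℝ) ({xE} : Set E)
      simpa using this
    omega
  set ob := stdOrthonormalBasis ℝ W with hob
  set v : Fin k → (Fin N → ℝ) :=
    fun i => WithLp.equiv 2 (Fin N → ℝ) ((ob (Fin.castLE hrank i) : W) : E) with hv
  have hvE : ∀ i, (WithLp.equiv 2 (Fin N → ℝ)).symm (v i) = ((ob (Fin.castLE hrank i) : W) : E) := by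
    intro i
    simp [hv]
  have hortho : ∀ i j, dotProduct (v i) (v j) = if i = j then (1:ℝ) else 0 := by
    intro i j
    rw [dotProduct_eq_inner, hvE, hvE, ← Submodule.coe_inner]
    rw [orthonormal_iff_ite.1 ob.orthonormal]
    by_cases h : i = j
    · simp [h]
    · rw [if_neg _, if_neg h]
      intro hc
      exact h (by simpa [Fin.ext_iff] using hc)
  have hxv : ∀ i, dotProduct x (v i) = 0 := by
    intro i
    rw [dotProduct_eq_inner, hvE]
    have hmem : ((ob (Fin.castLE hrank i) : W) : E) ∈ (Submodule.span ℝ ({xE} : Set E))ᗮ :=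
      SetLike.coe_mem _
    exact (Submodule.mem_orthogonal _ _).1 hmem xE (Submodule.mem_span_singleton_self xE)
  have hvv : ∀ i : Fin k, dotProduct (v i) (v i) = 1 := by
    intro i; rw [hortho i i, if_pos rfl]
  have hmem : (k:ℝ) * a ∈ S := by
    refine ⟨v, hortho, ?_⟩
    have hval : ∀ i : Fin k, dotProduct (X.mulVec (v i)) (v i) = a := by
      intro i
      rw [dot_quad a b x (v i) X hX, hxv, hvv]
      ring
    rw [Finset.sum_congr rfl (fun i _ => hval i)]
    simp [mul_comm]
  have hlb : ∀ s ∈ S, (k:ℝ) * a ≤ s := by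
    rintro s ⟨w, hw, rfl⟩
    have hge : ∀ i : Fin k, a ≤ dotProduct (X.mulVec (w i)) (w i) := by
      intro i
      rw [dot_quad a b x (w i) X hX]
      have h1 : dotProduct (w i) (w i) = 1 := by rw [hw i i, if_pos rfl]
      rw [h1]
      nlinarith [sq_nonneg (dotProduct x (w i))]
    calc (k:ℝ) * a = ∑ _i : Fin k, a := by simp [mul_comm]
    _ ≤ _ := Finset.sum_le_sum (fun i _ => hge i)
  exact le_antisymm (csInf_le ⟨(k:ℝ)*a, hlb⟩ hmem) (le_csInf ⟨_, hmem⟩ hlb)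


lemma exists_g (k : ℕ) (hk1 : 1 ≤ k) (f : ℝ → ℝ) (δ : ℝ) (hδ : 0 < δ)
    (hf1 : ContDiffOn ℝ 1 f (Set.Ioo (-δ) δ))
    (hf2 : MonotoneOn f (Set.Ioo (-δ) δ))
    (hf3 : ∀ s ∈ Set.Ioo (0:ℝ) δ, 0 < f s) (hf0 : f 0 = 0)
    {α : ℝ} (hα : α ∈ Set.Ioo (0:ℝ) δ) :
    ∃ (g : ℝ → ℝ) (ε : ℝ), 0 < ε ∧ g 0 = α ∧
      (∀ s, -ε < s → 0 < g s ∧ g s < δ) ∧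
      (∀ s, 0 ≤ s → g s ≤ α) ∧
      (∀ s, -ε < s → HasDerivAt g (-f (g s)/(2*(k:ℝ))) s) ∧
      (∀ s, -ε < s → HasDerivAt (fun t => -f (g t)/(2*(k:ℝ)))
        (deriv f (g s) * f (g s)/(2*(k:ℝ))^2) s) ∧
      (∀ s, -ε < s → ContinuousAt (fun t => deriv f (g t) * f (g t)/(2*(k:ℝ))^2) s) ∧
      (∀ s, 0 ≤ s → 0 ≤ deriv f (g s) * f (g s)/(2*(k:ℝ))^2) ∧
      Filter.Tendsto g Filter.atTop (nhds 0) := by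
  obtain ⟨hα0, hαδ⟩ := hα
  set c : ℝ := (α + δ)/2 with hc_def
  have hαc : α < c := by simp only [hc_def]; linarith
  have hcδ : c < δ := by simp only [hc_def]; linarith
  have hc0 : 0 < c := lt_trans hα0 hαc
  have hcmem : c ∈ Ioo (0:ℝ) δ := ⟨hc0, hcδ⟩
  have hαmem : α ∈ Ioo (0:ℝ) δ := ⟨hα0, hαδ⟩
  have hIooδ : Ioo (0:ℝ) δ ⊆ Ioo (-δ) δ := fun y hy => ⟨by linarith [hy.1], hy.2⟩
  have hkR : (0:ℝ) < (k:ℝ) := by exact_mod_cast hk1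
  have h2k : (0:ℝ) < 2*(k:ℝ) := by linarith
  set h : ℝ → ℝ := fun t => 2*(k:ℝ) / f t with hh_def
  have hhpos : ∀ y ∈ Ioo (0:ℝ) δ, 0 < h y := fun y hy => div_pos h2k (hf3 y hy)
  have hfcon : ContinuousOn f (Ioo (-δ) δ) := hf1.continuousOn
  have hhcont : ContinuousOn h (Ioo (0:ℝ) δ) :=
    continuousOn_const.div (hfcon.mono hIooδ) (fun y hy => (hf3 y hy).ne')
  have hint : ∀ y ∈ Ioo (0:ℝ) δ, ∀ z ∈ Ioo (0:ℝ) δ, IntervalIntegrable h volume y z := by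
    intro y hy z hz
    exact (hhcont.mono (Set.ordConnected_Ioo.uIcc_subset hy hz)).intervalIntegrable
  set φ : ℝ → ℝ := fun y => ∫ t in y..α, h t with hφ_def
  -- derivative of φ
  have hφd : ∀ y ∈ Ioo (0:ℝ) δ, HasDerivAt φ (-h y) y := by
    intro y hy
    exact integral_hasDerivAt_left (hint y hy α hαmem)
      (hhcont.stronglyMeasurableAtFilter isOpen_Ioo y hy)
      (hhcont.continuousAt (isOpen_Ioo.mem_nhds hy))
  -- strict antitonicity
  have hφanti : ∀ y₁ ∈ Ioo (0:ℝ) δ, ∀ y₂ ∈ Ioo (0:ℝ) δ, y₁ < y₂ → φ y₂ < φ y₁ := by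
    intro y₁ hy₁ y₂ hy₂ h12
    have hadd : (∫ t in y₁..y₂, h t) + ∫ t in y₂..α, h t = ∫ t in y₁..α, h t :=
      integral_add_adjacent_intervals (hint y₁ hy₁ y₂ hy₂) (hint y₂ hy₂ α hαmem)
    have hpos : 0 < ∫ t in y₁..y₂, h t := by
      apply intervalIntegral_pos_of_pos_on (hint y₁ hy₁ y₂ hy₂) _ h12
      intro t ht
      exact hhpos t ⟨lt_trans hy₁.1 ht.1, lt_trans ht.2 hy₂.2⟩
    simp only [hφ_def] at hadd ⊢
    linarith
  have hφα : φ α = 0 := integral_same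
  have hφc0 : φ c < 0 := by
    have := hφanti α hαmem c hcmem hαc
    rwa [hφα] at this
  -- divergence of φ at 0⁺
  have hdiv : ∀ s : ℝ, ∃ y ∈ Ioo (0:ℝ) α, s < φ y := by
    have h0mem : (0:ℝ) ∈ Ioo (-δ) δ := ⟨by linarith, hδ⟩
    have hcd : ContDiffAt ℝ 1 f 0 := hf1.contDiffAt (isOpen_Ioo.mem_nhds h0mem)
    obtain ⟨K, t, ht, hlip⟩ := hcd.exists_lipschitzOnWith
    obtain ⟨r, hr0, hball⟩ := Metric.mem_nhds_iff.1 ht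
    set L : ℝ := (K:ℝ) + 1 with hL_def
    have hL0 : 0 < L := by positivity
    set t₀ : ℝ := min (r/2) α with ht₀_def
    have ht₀0 : 0 < t₀ := lt_min (by linarith) hα0
    have ht₀α : t₀ ≤ α := min_le_right _ _
    have ht₀mem : t₀ ∈ Ioo (0:ℝ) δ := ⟨ht₀0, lt_of_le_of_lt ht₀α hαδ⟩
    have hfy : ∀ y : ℝ, y ∈ Ioc 0 t₀ → f y ≤ L * y := by
      intro y hy
      have hymem : y ∈ Metric.ball (0:ℝ) r := by
        simp only [Metric.mem_ball, Real.dist_eq, sub_zero]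
        rw [abs_of_pos hy.1]
        calc y ≤ t₀ := hy.2
        _ ≤ r/2 := min_le_left _ _
        _ < r := by linarith
      have h0t : (0:ℝ) ∈ t := mem_of_mem_nhds ht
      have := hlip.dist_le_mul y (hball hymem) 0 h0t
      rw [hf0, Real.dist_eq, Real.dist_eq, sub_zero, sub_zero] at this
      have h1 : f y ≤ (K:ℝ) * |y| := le_trans (le_abs_self _) this
      rw [abs_of_pos hy.1] at h1
      nlinarith [hy.1.le]
    -- lower bound for φ on (0, t₀)
    have hlow : ∀ y ∈ Ioo (0:ℝ) t₀, (2*(k:ℝ)/L) * (Real.log t₀ - Real.log y) + φ t₀ ≤ φ y := by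
      intro y hy
      have hymem : y ∈ Ioo (0:ℝ) δ := ⟨hy.1, lt_trans (lt_of_lt_of_le hy.2 ht₀α) hαδ⟩
      have hadd : (∫ s in y..t₀, h s) + ∫ s in t₀..α, h s = φ y :=
        integral_add_adjacent_intervals (hint y hymem t₀ ht₀mem) (hint t₀ ht₀mem α hαmem)
      have hcmp : (∫ s in y..t₀, (2*(k:ℝ)/L) * (1/s)) ≤ ∫ s in y..t₀, h s := by
        apply integral_mono_on hy.2.le
        · apply ContinuousOn.intervalIntegrable
          apply ContinuousOn.mul continuousOn_const
          apply ContinuousOn.div continuousOn_const continuousOn_id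
          intro s hs
          rw [uIcc_of_le hy.2.le] at hs
          exact (lt_of_lt_of_le hy.1 hs.1).ne'
        · exact hint y hymem t₀ ht₀mem
        · intro s hs
          have hs0 : 0 < s := lt_of_lt_of_le hy.1 hs.1
          have hfs := hf3 s ⟨hs0, lt_of_le_of_lt (le_trans hs.2 ht₀α) hαδ⟩
          have hfsL : f s ≤ L * s := hfy s ⟨hs0, hs.2⟩
          rw [hh_def]
          simp only
          rw [div_mul_div_comm, mul_one]
          apply div_le_div_of_nonneg_left h2k.le hfs hfsL
      have hval : (∫ s in y..t₀, (2*(k:ℝ)/L) * (1/s)) = (2*(k:ℝ)/L) * (Real.log t₀ - Real.log y) := by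
        rw [intervalIntegral.integral_const_mul, integral_one_div, Real.log_div ht₀0.ne' hy.1.ne']
        rw [uIcc_of_le hy.2.le]
        intro h0
        exact absurd h0.1 (not_le.2 hy.1)
      have hφt₀ : φ t₀ = ∫ s in t₀..α, h s := rfl
      simp only [hφ_def] at hadd ⊢
      linarith [hcmp, hval, hadd]
    -- tendsto atTop
    intro s
    have hneg : Tendsto (fun y : ℝ => -Real.log y) (nhdsWithin 0 (Ioi 0)) atTop :=
      tendsto_neg_atBot_atTop.comp Real.tendsto_log_nhdsGT_zero
    have h1 : Tendsto (fun y : ℝ => Real.log t₀ - Real.log y) (nhdsWithin 0 (Ioi 0)) atTop := by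
      have := tendsto_atTop_add_const_left _ (Real.log t₀) hneg
      simpa [sub_eq_add_neg] using this
    have h2 : Tendsto (fun y : ℝ => (2*(k:ℝ)/L) * (Real.log t₀ - Real.log y) + φ t₀)
        (nhdsWithin 0 (Ioi 0)) atTop := by
      apply tendsto_atTop_add_const_right
      exact Tendsto.const_mul_atTop (by positivity) h1
    have hev : ∀ᶠ y in nhdsWithin (0:ℝ) (Ioi 0),
        s < φ y ∧ y ∈ Ioo (0:ℝ) t₀ := by
      filter_upwards [h2.eventually (eventually_gt_atTop s),
        Ioo_mem_nhdsGT_of_mem (Set.left_mem_Ico.2 ht₀0)] with y hy1 hy2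
      exact ⟨lt_of_lt_of_le hy1 (hlow y hy2), hy2⟩
    obtain ⟨y, hy1, hy2⟩ := hev.exists
    exact ⟨y, ⟨hy2.1, lt_of_lt_of_le hy2.2 ht₀α⟩, hy1⟩
  -- surjectivity onto (φ c, ∞)
  have hφcont : ∀ y ∈ Ioo (0:ℝ) δ, ContinuousAt φ y := fun y hy => (hφd y hy).continuousAt
  have hsurj : ∀ s, φ c < s → ∃ y ∈ Ioo (0:ℝ) c, φ y = s := by
    intro s hs
    obtain ⟨y₀, hy₀, hsy₀⟩ := hdiv s
    have hy₀mem : y₀ ∈ Ioo (0:ℝ) δ := ⟨hy₀.1, lt_trans hy₀.2 hαδ⟩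
    have hy₀c : y₀ ≤ c := le_of_lt (lt_trans hy₀.2 hαc)
    have hsubset : Icc y₀ c ⊆ Ioo (0:ℝ) δ := fun z hz => ⟨lt_of_lt_of_le hy₀.1 hz.1, lt_of_le_of_lt hz.2 hcδ⟩
    have hconti : ContinuousOn φ (Icc y₀ c) := fun z hz => (hφcont z (hsubset hz)).continuousWithinAt
    have hIcc : Icc (φ c) (φ y₀) ⊆ φ '' Icc y₀ c := intermediate_value_Icc' hy₀c hconti
    obtain ⟨y, hyIcc, hφy⟩ := hIcc ⟨hs.le, hsy₀.le⟩
    refine ⟨y, ⟨lt_of_lt_of_le hy₀.1 hyIcc.1, lt_of_le_of_ne hyIcc.2 ?_⟩, hφy⟩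
    intro hyc
    rw [hyc] at hφy
    exact absurd hφy (ne_of_lt hs)
  set g : ℝ → ℝ := fun s => if hs : φ c < s then (hsurj s hs).choose else α with hg_def
  have hg1 : ∀ s, ∀ hs : φ c < s, g s ∈ Ioo (0:ℝ) c ∧ φ (g s) = s := by
    intro s hs
    simp only [hg_def, dif_pos hs]
    exact ⟨(hsurj s hs).choose_spec.1, (hsurj s hs).choose_spec.2⟩
  have hmemδ : ∀ s, ∀ hs : φ c < s, g s ∈ Ioo (0:ℝ) δ :=
    fun s hs => ⟨(hg1 s hs).1.1, lt_trans (hg1 s hs).1.2 hcδ⟩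
  -- comparison lemmas
  have hgl : ∀ s, ∀ _ : φ c < s, ∀ y ∈ Ioo (0:ℝ) δ, s < φ y → y < g s := by
    intro s hs y hy hsy
    rcases lt_trichotomy y (g s) with h' | h' | h'
    · exact h'
    · rw [h', (hg1 s hs).2] at hsy; exact absurd hsy (lt_irrefl s)
    · have := hφanti (g s) (hmemδ s hs) y hy h'
      rw [(hg1 s hs).2] at this
      linarith
  have hgu : ∀ s, ∀ _ : φ c < s, ∀ y ∈ Ioo (0:ℝ) δ, φ y < s → g s < y := by
    intro s hs y hy hsy
    rcases lt_trichotomy (g s) y with h' | h' | h'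
    · exact h'
    · rw [← h', (hg1 s hs).2] at hsy; exact absurd hsy (lt_irrefl s)
    · have := hφanti y hy (g s) (hmemδ s hs) h'
      rw [(hg1 s hs).2] at this
      linarith
  have hg0 : g 0 = α := by
    rcases lt_trichotomy (g 0) α with h' | h' | h'
    · have := hφanti (g 0) (hmemδ 0 hφc0) α hαmem h'
      rw [(hg1 0 hφc0).2, hφα] at this
      exact absurd this (lt_irrefl 0)
    · exact h'
    · have := hφanti α hαmem (g 0) (hmemδ 0 hφc0) h'
      rw [(hg1 0 hφc0).2, hφα] at this
      exact absurd this (lt_irrefl 0)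
  -- continuity of g
  have hgcont : ∀ s, φ c < s → ContinuousAt g s := by
    intro s hs
    have hy := (hg1 s hs).1
    have hφy := (hg1 s hs).2
    rw [ContinuousAt]
    apply tendsto_order.2
    constructor
    · intro a ha
      set a' : ℝ := max a (g s / 2) with ha'_def
      have ha'lt : a' < g s := max_lt ha (by linarith [hy.1])
      have ha'mem : a' ∈ Ioo (0:ℝ) δ :=
        ⟨lt_of_lt_of_le (by linarith [hy.1]) (le_max_right _ _),
         lt_trans (lt_trans ha'lt hy.2) hcδ⟩
      have h1 : s < φ a' := by
        have := hφanti a' ha'mem (g s) (hmemδ s hs) ha'lt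
        rwa [hφy] at this
      filter_upwards [Ioo_mem_nhds hs h1] with t ht
      exact lt_of_le_of_lt (le_max_left _ _) (hgl t ht.1 a' ha'mem ht.2)
    · intro b hb
      set b' : ℝ := min b ((g s + c)/2) with hb'_def
      have hb'gt : g s < b' := lt_min hb (by linarith [hy.2])
      have hb'mem : b' ∈ Ioo (0:ℝ) δ :=
        ⟨lt_trans hy.1 hb'gt, lt_of_le_of_lt (min_le_right _ _) (by linarith [hy.2])⟩
      have h1 : φ b' < s := by
        have := hφanti (g s) (hmemδ s hs) b' hb'mem hb'gt
        rwa [hφy] at this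
      filter_upwards [Ioi_mem_nhds (max_lt h1 hs)] with t ht
      have ht1 : φ c < t := lt_of_le_of_lt (le_max_right _ _) ht
      have ht2 : φ b' < t := lt_of_le_of_lt (le_max_left _ _) ht
      exact lt_of_lt_of_le (hgu t ht1 b' hb'mem ht2) (min_le_left _ _)
  -- derivative of g
  have hgd : ∀ s, φ c < s → HasDerivAt g (-f (g s)/(2*(k:ℝ))) s := by
    intro s hs
    have hy := hmemδ s hs
    have hfy := hf3 (g s) hy
    have hder : HasDerivAt φ (-h (g s)) (g s) := hφd (g s) hy
    have hne : -h (g s) ≠ 0 := neg_ne_zero.2 (hhpos (g s) hy).ne'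
    have hev : ∀ᶠ t in nhds s, φ (g t) = t := by
      filter_upwards [Ioi_mem_nhds hs] with t ht
      exact (hg1 t ht).2
    have := HasDerivAt.of_local_left_inverse (hgcont s hs) hder hne hev
    refine this.congr_deriv ?_
    simp only [hh_def]
    rw [inv_neg, inv_div]
    ring
  -- second derivative
  have hdiff : ∀ y ∈ Ioo (-δ) δ, HasDerivAt f (deriv f y) y := by
    intro y hy
    exact (((hf1.differentiableOn one_ne_zero) y hy).differentiableAt
      (isOpen_Ioo.mem_nhds hy)).hasDerivAt
  have hg2d : ∀ s, φ c < s →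
      HasDerivAt (fun t => -f (g t)/(2*(k:ℝ))) (deriv f (g s) * f (g s)/(2*(k:ℝ))^2) s := by
    intro s hs
    have hy := hmemδ s hs
    have hdf : HasDerivAt f (deriv f (g s)) (g s) := hdiff (g s) (hIooδ hy)
    have hcomp := hdf.comp s (hgd s hs)
    have h2 := hcomp.const_mul (-1/(2*(k:ℝ)))
    have heq : (fun t => -1/(2*(k:ℝ)) * (f ∘ g) t) = fun t => -f (g t)/(2*(k:ℝ)) := by
      funext t; simp [Function.comp]; ring
    rw [heq] at h2
    refine h2.congr_deriv ?_
    ring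
  -- continuity of second derivative formula
  have hdcont : ContinuousOn (deriv f) (Ioo (-δ) δ) :=
    hf1.continuousOn_deriv_of_isOpen isOpen_Ioo le_rfl
  have hg2c : ∀ s, φ c < s →
      ContinuousAt (fun t => deriv f (g t) * f (g t)/(2*(k:ℝ))^2) s := by
    intro s hs
    have hy := hIooδ (hmemδ s hs)
    have hgc := hgcont s hs
    have h1 : ContinuousAt (deriv f) (g s) := hdcont.continuousAt (isOpen_Ioo.mem_nhds hy)
    have h2 : ContinuousAt f (g s) := hfcon.continuousAt (isOpen_Ioo.mem_nhds hy)
    exact ((h1.comp hgc).mul (h2.comp hgc)).div_const _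
  -- nonnegativity of deriv f at points of (0, δ)
  have hderiv_nonneg : ∀ y ∈ Ioo (0:ℝ) δ, 0 ≤ deriv f y := by
    intro y hy
    have hymem := hIooδ hy
    have hdf := (hdiff y hymem).hasDerivWithinAt (s := Ioi y)
    have hslope := hasDerivWithinAt_iff_tendsto_slope.1 hdf
    have hIoi : Ioi y \ {y} = Ioi y := diff_singleton_eq_self (fun hc => lt_irrefl y hc)
    rw [hIoi] at hslope
    apply ge_of_tendsto hslope
    filter_upwards [Ioo_mem_nhdsGT_of_mem (Set.left_mem_Ico.2 hy.2)] with z hz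
    rw [slope_def_field]
    apply div_nonneg _ (by linarith [hz.1])
    rw [sub_nonneg]
    exact hf2 hymem ⟨by linarith [hy.1, hz.1], hz.2⟩ hz.1.le
  -- assemble
  refine ⟨g, -φ c, by linarith, hg0, ?_, ?_, ?_, ?_, ?_, ?_, ?_⟩
  · intro s hs
    rw [neg_neg] at hs
    exact ⟨(hg1 s hs).1.1, lt_trans (hg1 s hs).1.2 hcδ⟩
  · intro s hs
    rcases eq_or_lt_of_le hs with h' | h'
    · rw [← h', hg0]
    · have hsc : φ c < s := lt_trans hφc0 h'
      exact le_of_lt (hgu s hsc α hαmem (by rwa [hφα]))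
  · intro s hs; rw [neg_neg] at hs; exact hgd s hs
  · intro s hs; rw [neg_neg] at hs; exact hg2d s hs
  · intro s hs; rw [neg_neg] at hs; exact hg2c s hs
  · intro s hs
    have hsc : φ c < s := lt_of_lt_of_le hφc0 hs
    have hy := (hg1 s hsc).1
    have hymem : g s ∈ Ioo (0:ℝ) δ := ⟨hy.1, lt_trans hy.2 hcδ⟩
    have h1 : 0 ≤ deriv f (g s) := hderiv_nonneg (g s) hymem
    have h2 : 0 < f (g s) := hf3 (g s) hymem
    positivity
  · rw [Metric.tendsto_atTop]
    intro ε hε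
    set y' : ℝ := min (ε/2) (c/2) with hy'_def
    have hy'0 : 0 < y' := lt_min (by linarith) (by linarith)
    have hy'mem : y' ∈ Ioo (0:ℝ) δ :=
      ⟨hy'0, lt_of_le_of_lt (min_le_right _ _) (by linarith)⟩
    refine ⟨max (φ y') 0 + 1, fun s hs => ?_⟩
    have hs1 : φ y' < s := by
      have := le_max_left (φ y') 0
      linarith
    have hsc : φ c < s := by
      have := le_max_right (φ y') 0
      linarith
    have := hgu s hsc y' hy'mem hs1
    have hpos := (hg1 s hsc).1.1
    rw [Real.dist_eq, sub_zero, abs_of_pos hpos]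
    calc g s < y' := this
    _ ≤ ε/2 := min_le_left _ _
    _ < ε := by linarith


noncomputable def inSL (N : ℕ) :
    EuclideanSpace ℝ (Fin N) →L[ℝ] EuclideanSpace ℝ (Fin N) →L[ℝ] ℝ := innerSL ℝ

set_option maxHeartbeats 1000000 in
lemma exists_sol {n : ℕ} (k : ℕ) (hk1 : 1 ≤ k) (hk2 : k ≤ n + 1)
    (f : ℝ → ℝ) (δ : ℝ) (hδ : 0 < δ)
    (hf1 : ContDiffOn ℝ 1 f (Set.Ioo (-δ) δ))
    (hf2 : MonotoneOn f (Set.Ioo (-δ) δ))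
    (hf3 : ∀ s ∈ Set.Ioo (0 : ℝ) δ, 0 < f s)
    (hf0 : f 0 = 0) {α : ℝ} (hα : α ∈ Set.Ioo (0:ℝ) δ) :
    ∃ u : EuclideanSpace ℝ (Fin (n + 2)) → ℝ,
      ContDiff ℝ 2 u ∧ (∃ v : ℝ → ℝ, ∀ x, u x = v ‖x‖) ∧ u 0 = α ∧
      (∀ x, 0 < u x ∧ u x ≤ α) ∧
      Filter.Tendsto u (Filter.comap norm Filter.atTop) (nhds 0) ∧
      ∀ x, truncLap k (hess u x) + f (u x) = 0 := by
  obtain ⟨g, ε, hε, hg0, hgmem, hgle, hgd, hg2d, hg2c, hg2nn, hgtend⟩ :=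
    exists_g k hk1 f δ hδ hf1 hf2 hf3 hf0 hα
  set Q : EuclideanSpace ℝ (Fin (n+2)) → ℝ := fun x => ‖x‖^2 with hQdef
  have hQnn : ∀ x : EuclideanSpace ℝ (Fin (n+2)), 0 ≤ Q x := fun x => sq_nonneg _
  have hQ0 : ∀ x : EuclideanSpace ℝ (Fin (n+2)), -ε < Q x := fun x => lt_of_lt_of_le (by linarith) (hQnn x)
  have hQcont : Continuous Q := (continuous_norm).pow 2
  set g1 : ℝ → ℝ := fun s => -f (g s)/(2*(k:ℝ)) with hg1def
  set g2v : ℝ → ℝ := fun s => deriv f (g s) * f (g s)/(2*(k:ℝ))^2 with hg2def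
  set u : EuclideanSpace ℝ (Fin (n+2)) → ℝ := fun x => g (Q x) with hudef
  have hkR : (0:ℝ) < (k:ℝ) := by exact_mod_cast hk1
  -- first derivative
  have hsmul_eq : ∀ (r : ℝ) (x : EuclideanSpace ℝ (Fin (n+2))), r • ((2:ℕ) • innerSL ℝ x) = (2 * r) • innerSL ℝ x := by
    intro r x
    rw [← Nat.cast_smul_eq_nsmul ℝ, smul_smul]
    norm_num
    rw [mul_comm]
  have hu' : ∀ x : EuclideanSpace ℝ (Fin (n+2)), HasFDerivAt u ((2 * g1 (Q x)) • innerSL ℝ x) x := by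
    intro x
    have h1 := (hgd (Q x) (hQ0 x)).comp_hasFDerivAt x (hasStrictFDerivAt_norm_sq x).hasFDerivAt
    have h2 : g ∘ Q = u := rfl
    rw [h2, hsmul_eq] at h1
    exact h1
  have hfderiv_u : fderiv ℝ u = fun x => (2 * g1 (Q x)) • innerSL ℝ x :=
    funext fun x => (hu' x).fderiv
  -- second derivative
  have hΨ' : ∀ x : EuclideanSpace ℝ (Fin (n+2)), HasFDerivAt (fun y : EuclideanSpace ℝ (Fin (n+2)) => (2 * g1 (Q y)) • innerSL ℝ y)
      ((2 * g1 (Q x)) • inSL (n+2)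
        + ((4 * g2v (Q x)) • innerSL ℝ x).smulRight (innerSL ℝ x)) x := by
    intro x
    have hc : HasFDerivAt (fun y : EuclideanSpace ℝ (Fin (n+2)) => 2 * g1 (Q y)) ((4 * g2v (Q x)) • innerSL ℝ x) x := by
      have h1 := (hg2d (Q x) (hQ0 x)).comp_hasFDerivAt x (hasStrictFDerivAt_norm_sq x).hasFDerivAt
      have h2 : (fun t => -f (g t)/(2*(k:ℝ))) ∘ Q = fun y => g1 (Q y) := rfl
      rw [h2, hsmul_eq] at h1
      have h3 := h1.const_mul (2:ℝ)
      have h4 : (2:ℝ) • ((2 * g2v (Q x)) • innerSL ℝ x) = (4 * g2v (Q x)) • innerSL ℝ x := by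
        rw [smul_smul]; ring_nf
      rwa [h4] at h3
    have hf' : HasFDerivAt (fun y : EuclideanSpace ℝ (Fin (n+2)) => innerSL ℝ y) (inSL (n+2)) x :=
      (inSL (n+2)).hasFDerivAt
    exact hc.smul hf'
  have hfderiv_Ψ : (fderiv ℝ fun y : EuclideanSpace ℝ (Fin (n+2)) => (2 * g1 (Q y)) • innerSL ℝ y)
      = fun x => ((2 * g1 (Q x)) • inSL (n+2)
        + ((4 * g2v (Q x)) • innerSL ℝ x).smulRight (innerSL ℝ x)) :=
    funext fun x => (hΨ' x).fderiv
  -- continuity of the second derivative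
  have hg1cont : Continuous fun y : EuclideanSpace ℝ (Fin (n+2)) => g1 (Q y) := by
    rw [continuous_iff_continuousAt]
    intro x
    exact ((hg2d (Q x) (hQ0 x)).continuousAt).comp hQcont.continuousAt
  have hg2cont : Continuous fun y : EuclideanSpace ℝ (Fin (n+2)) => g2v (Q y) := by
    rw [continuous_iff_continuousAt]
    intro x
    exact (hg2c (Q x) (hQ0 x)).comp hQcont.continuousAt
  have hcontA : Continuous fun x : EuclideanSpace ℝ (Fin (n+2)) => ((2 * g1 (Q x)) • inSL (n+2)
      + ((4 * g2v (Q x)) • innerSL ℝ x).smulRight (innerSL ℝ x)) := by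
    haveI : ContinuousAdd (EuclideanSpace ℝ (Fin (n + 2)) →L[ℝ] EuclideanSpace ℝ (Fin (n + 2)) →L[ℝ] ℝ) :=
      (inferInstance : IsTopologicalAddGroup (EuclideanSpace ℝ (Fin (n + 2)) →L[ℝ] EuclideanSpace ℝ (Fin (n + 2)) →L[ℝ] ℝ)).toContinuousAdd
    apply Continuous.fun_add
    · exact ((continuous_const.mul hg1cont).smul continuous_const)
    · have h1 : Continuous fun y : EuclideanSpace ℝ (Fin (n+2)) => (4 * g2v (Q y)) • innerSL ℝ y :=
        (continuous_const.mul hg2cont).smul (inSL (n+2)).continuous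
      have h2 : Continuous fun y : EuclideanSpace ℝ (Fin (n+2)) => innerSL ℝ y := (inSL (n+2)).continuous
      exact (ContinuousLinearMap.smulRightL ℝ (EuclideanSpace ℝ (Fin (n+2))) (EuclideanSpace ℝ (Fin (n+2)) →L[ℝ] ℝ)).continuous₂.comp (h1.prodMk h2)
  -- C² regularity
  have hcd2 : ContDiff ℝ 2 u := by
    have hΨcd : ContDiff ℝ 1 (fun y : EuclideanSpace ℝ (Fin (n+2)) => (2 * g1 (Q y)) • innerSL ℝ y) :=
      contDiff_one_iff_fderiv.2
        ⟨fun x => (hΨ' x).differentiableAt, by rw [hfderiv_Ψ]; exact hcontA⟩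
    have h12 : (2 : WithTop ℕ∞) = 1 + 1 := by norm_num
    rw [h12, contDiff_succ_iff_fderiv]
    refine ⟨fun x => (hu' x).differentiableAt, ?_, by rw [hfderiv_u]; exact hΨcd⟩
    intro hω
    simp at hω
  -- Hessian entries
  have happ : ∀ (x e e' : EuclideanSpace ℝ (Fin (n+2))),
      ((2 * g1 (Q x)) • inSL (n+2)
        + ((4 * g2v (Q x)) • innerSL ℝ x).smulRight (innerSL ℝ x)) e e'
      = 2 * g1 (Q x) * (inner ℝ e e' : ℝ)
        + (4 * g2v (Q x)) * (inner ℝ x e : ℝ) * (inner ℝ x e' : ℝ) := by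
    intro x e e'
    simp only [ContinuousLinearMap.add_apply, ContinuousLinearMap.smul_apply,
      ContinuousLinearMap.smulRight_apply, smul_eq_mul]
    have h1 : inSL (n+2) e e' = (inner ℝ e e' : ℝ) := rfl
    have h2 : innerSL ℝ x e = (inner ℝ x e : ℝ) := rfl
    have h3 : innerSL ℝ x e' = (inner ℝ x e' : ℝ) := rfl
    rw [h1, h2, h3]
  have hhess : ∀ (x : EuclideanSpace ℝ (Fin (n+2))) i j, hess u x i j
      = (4 * g2v (Q x)) * x i * x j + (if i = j then 2 * g1 (Q x) else 0) := by
    intro x i j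
    have hmm : hess u x i j = iteratedFDeriv ℝ 2 u x
        ![EuclideanSpace.single i 1, EuclideanSpace.single j 1] := rfl
    rw [hmm, iteratedFDeriv_two_apply, hfderiv_u, hfderiv_Ψ]
    simp only [Matrix.cons_val_zero, Matrix.cons_val_one, Matrix.head_cons]
    rw [happ]
    have e1 : (inner ℝ (EuclideanSpace.single i (1:ℝ)) (EuclideanSpace.single j (1:ℝ)) : ℝ)
        = if i = j then (1:ℝ) else 0 := by
      rw [EuclideanSpace.inner_single_right]
      simp [EuclideanSpace.single_apply]
      by_cases h : i = j <;> simp [h]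
      exact fun h' => absurd h'.symm h
    have e2 : (inner ℝ x (EuclideanSpace.single i (1:ℝ)) : ℝ) = x i := by
      rw [EuclideanSpace.inner_single_right]; simp
    have e3 : (inner ℝ x (EuclideanSpace.single j (1:ℝ)) : ℝ) = x j := by
      rw [EuclideanSpace.inner_single_right]; simp
    rw [e1, e2, e3]
    by_cases h : i = j <;> simp [h] <;> ring
  -- the PDE
  have hpde : ∀ x : EuclideanSpace ℝ (Fin (n+2)), truncLap k (hess u x) + f (u x) = 0 := by
    intro x
    have hb : (0:ℝ) ≤ 4 * g2v (Q x) := by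
      have := hg2nn (Q x) (hQnn x)
      simp only [hg2def] at this ⊢
      linarith
    have hXeq : hess u x = fun i j => (4 * g2v (Q x)) * x i * x j
        + (if i = j then 2 * g1 (Q x) else 0) := by
      funext i j
      exact hhess x i j
    rw [hXeq, truncLap_eval (by omega) (2 * g1 (Q x)) (4 * g2v (Q x)) hb (fun i => x i)]
    have hu_eq : u x = g (Q x) := rfl
    rw [hu_eq]
    simp only [hg1def]
    field_simp
    ring
  refine ⟨u, hcd2, ⟨fun r => g (r^2), fun x => rfl⟩, ?_, ?_, ?_, hpde⟩
  · show g (Q 0) = α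
    have hq0 : Q 0 = 0 := by simp [hQdef]
    rw [hq0, hg0]
  · intro x
    exact ⟨(hgmem (Q x) (hQ0 x)).1, hgle (Q x) (hQnn x)⟩
  · have h1 : Filter.Tendsto (fun x : EuclideanSpace ℝ (Fin (n+2)) => ‖x‖)
        (Filter.comap norm Filter.atTop) Filter.atTop := tendsto_comap
    have h2 : Filter.Tendsto (fun r : ℝ => r^2) Filter.atTop Filter.atTop :=
      tendsto_pow_atTop two_ne_zero
    exact hgtend.comp (h2.comp h1)


end Aux

/-- under the assumptions (3.2) on `f` (C¹ and nondecreasing on `(-δ,δ)`,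
positive on `(0,δ)`, `f(0) = 0`), for every `α ∈ (0,δ)` there is a positive bounded
radial C² solution `u_α` of `P⁻ₖ(D²u) + f(u) = 0` in `ℝ^N` with `u_α(0) = α`,
`0 < u_α ≤ α`, and `u_α(x) → 0` as `|x| → ∞`; in particular the equation admits
infinitely many positive bounded radial classical solutions. -/

theorem stmt9 {n : ℕ} (k : ℕ) (hk1 : 1 ≤ k) (hk2 : k ≤ n + 1)
    (f : ℝ → ℝ) (δ : ℝ) (hδ : 0 < δ)
    (hf1 : ContDiffOn ℝ 1 f (Set.Ioo (-δ) δ))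
    (hf2 : MonotoneOn f (Set.Ioo (-δ) δ))
    (hf3 : ∀ s ∈ Set.Ioo (0 : ℝ) δ, 0 < f s)
    (hf0 : f 0 = 0) :
    (∀ α ∈ Set.Ioo (0 : ℝ) δ, ∃ u : EuclideanSpace ℝ (Fin (n + 2)) → ℝ,
      ContDiff ℝ 2 u ∧ (∃ v : ℝ → ℝ, ∀ x, u x = v ‖x‖) ∧ u 0 = α ∧
      (∀ x, 0 < u x ∧ u x ≤ α) ∧
      Filter.Tendsto u (Filter.comap norm Filter.atTop) (nhds 0) ∧
      ∀ x, truncLap k (hess u x) + f (u x) = 0) ∧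
    Set.Infinite {u : EuclideanSpace ℝ (Fin (n + 2)) → ℝ |
      ContDiff ℝ 2 u ∧ (∃ v : ℝ → ℝ, ∀ x, u x = v ‖x‖) ∧ (∀ x, 0 < u x) ∧
      (∃ C : ℝ, ∀ x, u x ≤ C) ∧ ∀ x, truncLap k (hess u x) + f (u x) = 0} := by
  constructor
  · intro α hα
    exact exists_sol k hk1 hk2 f δ hδ hf1 hf2 hf3 hf0 hα
  · have hsol : ∀ a : Set.Ioo (0:ℝ) δ, ∃ u : EuclideanSpace ℝ (Fin (n + 2)) → ℝ,
        ContDiff ℝ 2 u ∧ (∃ v : ℝ → ℝ, ∀ x, u x = v ‖x‖) ∧ u 0 = (a:ℝ) ∧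
        (∀ x, 0 < u x ∧ u x ≤ (a:ℝ)) ∧
        Filter.Tendsto u (Filter.comap norm Filter.atTop) (nhds 0) ∧
        ∀ x, truncLap k (hess u x) + f (u x) = 0 :=
      fun a => exists_sol k hk1 hk2 f δ hδ hf1 hf2 hf3 hf0 a.2
    choose F hF using hsol
    haveI : Infinite (Set.Ioo (0:ℝ) δ) := Set.Ioo.infinite hδ
    apply Set.infinite_of_injective_forall_mem (f := F)
    · intro a b hab
      have h1 := (hF a).2.2.1
      have h2 := (hF b).2.2.1
      apply Subtype.ext
      rw [← h1, ← h2, hab]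
    · intro a
      obtain ⟨h1, h2, h3, h4, h5, h6⟩ := hF a
      exact ⟨h1, h2, fun x => (h4 x).1, ⟨(a:ℝ), fun x => (h4 x).2⟩, h6⟩
end

section
/- Let k ≥ 1 and let f : ℝ → ℝ satisfy: there exists δ > 0 such that f is C¹ and nondecreasing on (−δ, δ), f(u) > 0 for all u ∈ (0, δ), and f(0) = 0. Then for every α ∈ (0, δ), the initial value problem v'(r) + (r/k) f(v(r)) = 0, v(0) = α, has a (unique) solution v_α defined on all of [0, ∞), and v_α satisfies: v_α is strictly decreasing on [0, ∞), 0 < v_α(r) ≤ α for all r ≥ 0, v_α(r) → 0 as r → ∞, and v_α''(r) ≥ v_α'(r)/r for every r > 0. -/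
set_option maxHeartbeats 1000000
open Set Filter MeasureTheory intervalIntegral Real Topology

lemma mono_deriv_nonneg {f : ℝ → ℝ} {s : Set ℝ} (hs : IsOpen s) (hm : MonotoneOn f s)
    {x c : ℝ} (hx : x ∈ s) (hf : HasDerivAt f c x) : 0 ≤ c := by
  have h := hasDerivAt_iff_tendsto_slope.1 hf
  have h' : Tendsto (slope f x) (𝓝[>] x) (𝓝 c) :=
    h.mono_left (nhdsWithin_mono x (fun y hy => ne_of_gt hy))
  refine ge_of_tendsto h' ?_
  filter_upwards [self_mem_nhdsWithin,
    eventually_nhdsWithin_of_eventually_nhds (hs.eventually_mem hx)] with y hy hys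
  rw [slope_def_field]
  have : x < y := hy
  exact div_nonneg (by have := hm hx hys this.le; linarith) (by linarith)

/-- under the assumptions (3.2) on `f`, for every `α ∈ (0,δ)` the initial
value problem `v'(r) + (r/k) f(v(r)) = 0`, `v(0) = α` has a unique solution defined on all
of `[0,∞)`, which is strictly decreasing, satisfies `0 < v ≤ α`, tends to `0` at `+∞`,
and satisfies `v''(r) ≥ v'(r)/r` for every `r > 0`. -/
theorem stmt10 (k : ℕ) (hk : 1 ≤ k)
    (f : ℝ → ℝ) (δ : ℝ) (hδ : 0 < δ)
    (hf1 : ContDiffOn ℝ 1 f (Set.Ioo (-δ) δ))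
    (hf2 : MonotoneOn f (Set.Ioo (-δ) δ))
    (hf3 : ∀ s ∈ Set.Ioo (0 : ℝ) δ, 0 < f s)
    (hf0 : f 0 = 0) :
    ∀ α ∈ Set.Ioo (0 : ℝ) δ, ∃ v : ℝ → ℝ,
      (∀ r ∈ Set.Ici (0 : ℝ), HasDerivAt v (-(r / k) * f (v r)) r) ∧
      v 0 = α ∧
      StrictAntiOn v (Set.Ici 0) ∧
      (∀ r ∈ Set.Ici (0 : ℝ), 0 < v r ∧ v r ≤ α) ∧
      Filter.Tendsto v Filter.atTop (nhds 0) ∧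
      (∀ r : ℝ, 0 < r → deriv v r / r ≤ deriv (deriv v) r) ∧
      (∀ w : ℝ → ℝ, (∀ r ∈ Set.Ici (0 : ℝ), HasDerivAt w (-(r / k) * f (w r)) r) →
        w 0 = α → ∀ r ∈ Set.Ici (0 : ℝ), w r = v r) := by
  intro α hα
  obtain ⟨hα0, hαδ⟩ := hα
  have hk0 : (0:ℝ) < (k:ℝ) := by exact_mod_cast Nat.lt_of_lt_of_le Nat.zero_lt_one hk
  have hsub : Ioc 0 α ⊆ Ioo (-δ) δ := fun s hs => ⟨by nlinarith [hs.1], lt_of_le_of_lt hs.2 hαδ⟩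
  have hfpos : ∀ u ∈ Ioc (0:ℝ) α, 0 < f u := fun u hu => hf3 u ⟨hu.1, lt_of_le_of_lt hu.2 hαδ⟩
  have hαmem : α ∈ Ioc (0:ℝ) α := ⟨hα0, le_rfl⟩
  have hfα : 0 < f α := hfpos α hαmem
  have hfc : ∀ u ∈ Ioo (-δ) δ, ContinuousAt f u := fun u hu =>
    hf1.continuousOn.continuousAt (isOpen_Ioo.mem_nhds hu)
  set g : ℝ → ℝ := fun s => (f s)⁻¹ with hgdef
  have hIoosub : Ioo (0:ℝ) δ ⊆ Ioo (-δ) δ := fun s hs => ⟨by nlinarith [hs.1], hs.2⟩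
  have hgc : ContinuousOn g (Ioo 0 δ) :=
    ((hf1.continuousOn.mono hIoosub).inv₀ (fun s hs => (hf3 s hs).ne'))
  have hIccsub : ∀ u ∈ Ioc (0:ℝ) α, Icc u α ⊆ Ioo 0 δ := fun u hu s hs =>
    ⟨lt_of_lt_of_le hu.1 hs.1, lt_of_le_of_lt hs.2 hαδ⟩
  have hgint : ∀ u ∈ Ioc (0:ℝ) α, IntervalIntegrable g volume u α := by
    intro u hu
    apply ContinuousOn.intervalIntegrable
    rw [uIcc_of_le hu.2]
    exact hgc.mono (hIccsub u hu)
  set G : ℝ → ℝ := fun u => ∫ s in u..α, g s with hGdef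
  have hGα : G α = 0 := by simp [hGdef]
  have hGd : ∀ u ∈ Ioc (0:ℝ) α, HasDerivAt G (-(g u)) u := by
    intro u hu
    refine intervalIntegral.integral_hasDerivAt_left (hgint u hu) ?_ ?_
    · exact ⟨Ioo 0 δ, isOpen_Ioo.mem_nhds ⟨hu.1, lt_of_le_of_lt hu.2 hαδ⟩,
        (hgc.mono (by simp)).aestronglyMeasurable measurableSet_Ioo⟩
    · exact hgc.continuousAt (isOpen_Ioo.mem_nhds ⟨hu.1, lt_of_le_of_lt hu.2 hαδ⟩)
  have hGcont : ContinuousOn G (Ioc 0 α) := fun u hu =>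
    ((hGd u hu).continuousAt).continuousWithinAt
  have hGanti : StrictAntiOn G (Ioc 0 α) := by
    apply strictAntiOn_of_deriv_neg (convex_Ioc 0 α) hGcont
    intro x hx
    rw [interior_Ioc] at hx
    rw [(hGd x ⟨hx.1, hx.2.le⟩).deriv]
    have := inv_pos.2 (hfpos x ⟨hx.1, hx.2.le⟩)
    simp only [hgdef] at this ⊢
    linarith
  have hGnonneg : ∀ u ∈ Ioc (0:ℝ) α, 0 ≤ G u := by
    intro u hu
    apply intervalIntegral.integral_nonneg hu.2
    intro s hs
    exact (inv_pos.2 (hfpos s ⟨lt_of_lt_of_le hu.1 hs.1, hs.2⟩)).le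
  have hGlb : ∀ u ∈ Ioc (0:ℝ) α, (α - u) * (f α)⁻¹ ≤ G u := by
    intro u hu
    have hconst : IntervalIntegrable (fun _ : ℝ => (f α)⁻¹) volume u α :=
      intervalIntegrable_const
    have hle : ∀ s ∈ Icc u α, (f α)⁻¹ ≤ g s := by
      intro s hs
      have hs' : s ∈ Ioc (0:ℝ) α := ⟨lt_of_lt_of_le hu.1 hs.1, hs.2⟩
      have hfs : 0 < f s := hfpos s hs'
      have : f s ≤ f α := hf2 (hsub hs') (hsub hαmem) hs.2
      exact inv_anti₀ hfs this
    have := intervalIntegral.integral_mono_on hu.2 hconst (hgint u hu) hle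
    simpa using this
  have hGtop : Tendsto G (𝓝[>] (0:ℝ)) atTop := by
    have h0mem : (0:ℝ) ∈ Ioo (-δ) δ := ⟨by linarith, hδ⟩
    have hcd : ContDiffAt ℝ 1 f 0 := hf1.contDiffAt (isOpen_Ioo.mem_nhds h0mem)
    obtain ⟨K, t, ht, hK⟩ := hcd.exists_lipschitzOnWith
    obtain ⟨ε, hε, hball⟩ := Metric.mem_nhds_iff.1 ht
    set a₀ : ℝ := min (ε/2) α with ha₀def
    have ha₀0 : 0 < a₀ := lt_min (by linarith) hα0
    have ha₀α : a₀ ≤ α := min_le_right _ _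
    have ha₀mem : a₀ ∈ Ioc (0:ℝ) α := ⟨ha₀0, ha₀α⟩
    set L : ℝ := max (K:ℝ) 1 with hLdef
    have hL1 : (1:ℝ) ≤ L := le_max_right _ _
    have hL0 : (0:ℝ) < L := by linarith
    have hfle : ∀ s ∈ Icc (0:ℝ) a₀, f s ≤ L * s := by
      intro s hs
      have hsball : s ∈ Metric.ball (0:ℝ) ε := by
        rw [Metric.mem_ball, Real.dist_eq, sub_zero, abs_of_nonneg hs.1]
        have : a₀ ≤ ε/2 := min_le_left _ _
        linarith [hs.2]
      have h0ball : (0:ℝ) ∈ Metric.ball (0:ℝ) ε := Metric.mem_ball_self hε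
      have := hK.dist_le_mul s (hball hsball) 0 (hball h0ball)
      rw [hf0, Real.dist_eq, Real.dist_eq, sub_zero, sub_zero, abs_of_nonneg hs.1] at this
      calc f s ≤ |f s| := le_abs_self _
        _ ≤ K * s := this
        _ ≤ L * s := by
            apply mul_le_mul_of_nonneg_right (le_max_left _ _) hs.1
    have hbound : ∀ u ∈ Ioo (0:ℝ) a₀, (Real.log a₀ - Real.log u) / L ≤ G u := by
      intro u hu
      have hu' : u ∈ Ioc (0:ℝ) α := ⟨hu.1, le_trans hu.2.le ha₀α⟩
      have hint1 : IntervalIntegrable g volume u a₀ := by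
        apply ContinuousOn.intervalIntegrable
        rw [uIcc_of_le hu.2.le]
        exact hgc.mono (fun s hs => (hIccsub u hu') ⟨hs.1, le_trans hs.2 ha₀α⟩)
      have hint2 : IntervalIntegrable g volume a₀ α := hgint a₀ ha₀mem
      have hsplit : G u = (∫ s in u..a₀, g s) + ∫ s in a₀..α, g s :=
        (intervalIntegral.integral_add_adjacent_intervals hint1 hint2).symm
      have h2nonneg : 0 ≤ ∫ s in a₀..α, g s := by
        apply intervalIntegral.integral_nonneg ha₀α
        intro s hs
        exact (inv_pos.2 (hfpos s ⟨lt_of_lt_of_le ha₀0 hs.1, hs.2⟩)).le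
      have hintc : IntervalIntegrable (fun s => (L*s)⁻¹) volume u a₀ := by
        apply ContinuousOn.intervalIntegrable
        apply ContinuousOn.inv₀ (continuous_const.mul continuous_id).continuousOn
        intro s hs
        rw [uIcc_of_le hu.2.le] at hs
        have : 0 < s := lt_of_lt_of_le hu.1 hs.1
        exact mul_ne_zero hL0.ne' this.ne'
      have hmono : ∫ s in u..a₀, (L*s)⁻¹ ≤ ∫ s in u..a₀, g s := by
        apply intervalIntegral.integral_mono_on hu.2.le hintc hint1
        intro s hs
        have hspos : 0 < s := lt_of_lt_of_le hu.1 hs.1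
        have hs' : s ∈ Ioc (0:ℝ) α := ⟨hspos, le_trans hs.2 ha₀α⟩
        exact inv_anti₀ (hfpos s hs') (hfle s ⟨hspos.le, hs.2⟩)
      have hval : ∫ s in u..a₀, (L*s)⁻¹ = (Real.log a₀ - Real.log u) / L := by
        have : ∀ s : ℝ, (L*s)⁻¹ = L⁻¹ * s⁻¹ := fun s => by rw [mul_inv]
        simp_rw [this]
        rw [intervalIntegral.integral_const_mul, integral_inv (by
          rw [uIcc_of_le hu.2.le]
          intro hmem
          exact absurd hmem.1 (by push_neg; exact hu.1))]
        rw [Real.log_div (ne_of_gt ha₀0) (ne_of_gt hu.1)]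
        ring
      rw [hsplit, ← hval]
      linarith
    have htend : Tendsto (fun u => (Real.log a₀ - Real.log u) / L) (𝓝[>] (0:ℝ)) atTop := by
      apply Tendsto.atTop_div_const hL0
      have h1 : Tendsto (fun u : ℝ => -Real.log u) (𝓝[>] (0:ℝ)) atTop :=
        tendsto_neg_atBot_atTop.comp Real.tendsto_log_nhdsGT_zero
      have := tendsto_atTop_add_const_left (𝓝[>] (0:ℝ)) (Real.log a₀) h1
      simpa [sub_eq_add_neg] using this
    apply tendsto_atTop_mono' _ _ htend
    filter_upwards [Ioo_mem_nhdsGT_of_mem (⟨le_rfl, ha₀0⟩ : (0:ℝ) ∈ Ico 0 a₀)] with u hu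
    exact hbound u hu
  have hsurj : ∀ y : ℝ, 0 ≤ y → ∃ u ∈ Ioc (0:ℝ) α, G u = y := by
    intro y hy
    have h1 : ∀ᶠ u in 𝓝[>] (0:ℝ), y ≤ G u := hGtop.eventually (eventually_ge_atTop y)
    have h2 : Ioo (0:ℝ) α ∈ 𝓝[>] (0:ℝ) := Ioo_mem_nhdsGT_of_mem ⟨le_rfl, hα0⟩
    obtain ⟨u₀, hu₀G, hu₀⟩ := (h1.and (eventually_of_mem h2 (fun x hx => hx))).exists
    have hu₀' : u₀ ∈ Ioc (0:ℝ) α := ⟨hu₀.1, hu₀.2.le⟩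
    have hcont : ContinuousOn G (Icc u₀ α) := hGcont.mono (fun s hs => ⟨lt_of_lt_of_le hu₀.1 hs.1, hs.2⟩)
    have := intermediate_value_Icc' hu₀.2.le hcont
    have hyIn : y ∈ Icc (G α) (G u₀) := ⟨hGα ▸ hy, hu₀G⟩
    obtain ⟨u, hu, hGu⟩ := this hyIn
    exact ⟨u, ⟨lt_of_lt_of_le hu₀.1 hu.1, hu.2⟩, hGu⟩
  classical
  set W : ℝ → ℝ := fun y => if h : ∃ u ∈ Ioc (0:ℝ) α, G u = y then h.choose else α with hWdef
  have hW : ∀ y : ℝ, 0 ≤ y → W y ∈ Ioc (0:ℝ) α ∧ G (W y) = y := by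
    intro y hy
    have h := hsurj y hy
    rw [hWdef]
    simp only [dif_pos h]
    exact ⟨h.choose_spec.1, h.choose_spec.2⟩
  have hGinj : InjOn G (Ioc 0 α) := hGanti.injOn
  have hW0 : W 0 = α := by
    have h := hW 0 le_rfl
    exact hGinj h.1 hαmem (by rw [h.2, hGα])
  have hWanti : ∀ y₁ y₂ : ℝ, 0 ≤ y₁ → y₁ < y₂ → W y₂ < W y₁ := by
    intro y₁ y₂ hy₁ hlt
    have h1 := hW y₁ hy₁
    have h2 := hW y₂ (le_trans hy₁ hlt.le)
    by_contra hle
    push_neg at hle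
    rcases eq_or_lt_of_le hle with heq | hlt2
    · rw [heq, h2.2] at h1; exact absurd h1.2 (by linarith)
    · have := hGanti h1.1 h2.1 hlt2
      rw [h1.2, h2.2] at this; linarith
  -- continuity of W at positive points
  have hWcont : ∀ y : ℝ, 0 < y → ContinuousAt W y := by
    intro y hy
    have hWy := hW y hy.le
    set x := W y with hxdef
    have hxα : x < α := by
      rcases lt_or_eq_of_le hWy.1.2 with h | h
      · exact h
      · exfalso; rw [h] at hWy; rw [hGα] at hWy; linarith [hWy.2]
    rw [ContinuousAt]
    apply tendsto_order.2
    constructor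
    · intro b hb
      rcases le_or_gt b 0 with hb0 | hb0
      · filter_upwards [eventually_gt_nhds hy] with y' hy'
        exact lt_of_le_of_lt hb0 (hW y' hy'.le).1.1
      · have hbmem : b ∈ Ioc (0:ℝ) α := ⟨hb0, le_trans hb.le hWy.1.2⟩
        have hGb : y < G b := by
          have := hGanti hbmem hWy.1 hb
          rwa [hWy.2] at this
        filter_upwards [eventually_gt_nhds hy, eventually_lt_nhds hGb] with y' hy1 hy2
        by_contra hle
        push_neg at hle
        have hy'mem := hW y' hy1.le
        rcases eq_or_lt_of_le hle with heq | hlt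
        · rw [heq] at hy'mem
          rw [hy'mem.2] at hy2; linarith
        · have := hGanti hy'mem.1 hbmem hlt
          rw [hy'mem.2] at this; linarith
    · intro b hb
      rcases le_or_gt b α with hbα | hbα
      · have hbmem : b ∈ Ioc (0:ℝ) α := ⟨lt_trans hWy.1.1 hb, hbα⟩
        have hGb : G b < y := by
          have := hGanti hWy.1 hbmem hb
          rwa [hWy.2] at this
        filter_upwards [eventually_gt_nhds (lt_of_le_of_lt (hGnonneg b hbmem) hGb),
          eventually_gt_nhds hGb] with y' hy1 hy2
        by_contra hle
        push_neg at hle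
        have hy'mem := hW y' (le_trans (hGnonneg b hbmem) hy2.le)
        rcases eq_or_lt_of_le hle with heq | hlt
        · rw [← heq] at hy'mem
          rw [hy'mem.2] at hy2; linarith
        · have := hGanti hbmem hy'mem.1 hlt
          rw [hy'mem.2] at this; linarith
      · filter_upwards [eventually_gt_nhds hy] with y' hy'
        exact lt_of_le_of_lt (hW y' hy'.le).1.2 hbα
  -- the map r ↦ r²/(2k)
  set q : ℝ → ℝ := fun r => r^2 / (2*(k:ℝ)) with hqdef
  have hq0 : ∀ r : ℝ, 0 ≤ q r := fun r => by positivity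
  have hqd : ∀ r : ℝ, HasDerivAt q (r / k) r := by
    intro r
    have h := (hasDerivAt_pow 2 r).div_const (2*(k:ℝ))
    refine h.congr_deriv ?_
    field_simp
    ring
  set v : ℝ → ℝ := fun r => W (q r) with hvdef
  have hvmem : ∀ r : ℝ, v r ∈ Ioc (0:ℝ) α := fun r => (hW (q r) (hq0 r)).1
  have hGv : ∀ r : ℝ, G (v r) = q r := fun r => (hW (q r) (hq0 r)).2
  have hv0 : v 0 = α := by
    have : q 0 = 0 := by simp [hqdef]
    rw [hvdef]; simp only [this]; exact hW0
  -- upper bound : α - v r ≤ f α * q r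
  have hub : ∀ r : ℝ, α - v r ≤ f α * q r := by
    intro r
    have h := hGlb (v r) (hvmem r)
    rw [hGv r] at h
    calc α - v r = (α - v r) * (f α)⁻¹ * f α := by field_simp
      _ ≤ q r * f α := by apply mul_le_mul_of_nonneg_right h hfα.le
      _ = f α * q r := mul_comm _ _
  -- derivative of v at positive r
  have hvdpos : ∀ r : ℝ, 0 < r → HasDerivAt v (-(r / k) * f (v r)) r := by
    intro r hr
    have hy : 0 < q r := by rw [hqdef]; positivity
    have hG' : HasDerivAt G (-(g (v r))) (v r) := hGd _ (hvmem r)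
    have hgpos : 0 < g (v r) := inv_pos.2 (hfpos _ (hvmem r))
    have hne : -(g (v r)) ≠ 0 := by linarith
    have hfg : ∀ᶠ y in 𝓝 (q r), G (W y) = y := by
      filter_upwards [eventually_gt_nhds hy] with y hy'
      exact (hW y hy'.le).2
    have hWd : HasDerivAt W (-(g (v r)))⁻¹ (q r) :=
      HasDerivAt.of_local_left_inverse (hWcont _ hy) hG' hne hfg
    have hval : (-(g (v r)))⁻¹ = -f (v r) := by
      rw [hgdef]
      simp only []
      rw [inv_neg, inv_inv]
    rw [hval] at hWd
    have := hWd.comp r (hqd r)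
    refine this.congr_deriv ?_
    ring
  -- derivative of v at 0
  have hvd0 : HasDerivAt v 0 0 := by
    rw [hasDerivAt_iff_isLittleO]
    rw [Asymptotics.isLittleO_iff]
    intro c hc
    have hCpos : 0 < f α / (2*(k:ℝ)) + 1 := by positivity
    filter_upwards [Metric.ball_mem_nhds (0:ℝ) (show 0 < c / (f α / (2*(k:ℝ)) + 1) by positivity)]
      with r hrball
    rw [Metric.mem_ball, Real.dist_eq, sub_zero] at hrball
    have h1 : α - v r ≤ f α * q r := hub r
    have h2 : v r ≤ α := (hvmem r).2
    have h3 : |v r - v 0 - (r - 0) * 0| = α - v r := by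
      rw [hv0]; simp only [sub_zero, mul_zero, sub_zero]
      rw [abs_of_nonpos (by linarith), neg_sub]
    simp only [smul_eq_mul, Real.norm_eq_abs]
    rw [h3, sub_zero]
    have hq' : q r = r^2/(2*(k:ℝ)) := rfl
    have habs : r^2 = |r| * |r| := by rw [← abs_mul, sq, abs_mul_self r]
    have : f α * q r ≤ c * |r| := by
      rw [hq', div_eq_mul_inv, habs]
      have hb1 : |r| ≤ c / (f α / (2*(k:ℝ)) + 1) := hrball.le
      have h4 : 0 ≤ |r| := abs_nonneg r
      have h5 : f α / (2*(k:ℝ)) * |r| ≤ c := by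
        rw [le_div_iff₀ hCpos] at hb1
        nlinarith [h4]
      have h6 : f α * (|r| * |r| * (2*(k:ℝ))⁻¹) = (f α / (2*(k:ℝ)) * |r|) * |r| := by
        rw [div_eq_mul_inv]; ring
      rw [h6]
      exact mul_le_mul_of_nonneg_right h5 h4
    linarith
  have hvd : ∀ r ∈ Ici (0:ℝ), HasDerivAt v (-(r / k) * f (v r)) r := by
    intro r hr
    rcases eq_or_lt_of_le (mem_Ici.1 hr) with h | h
    · rw [← h]
      have : -((0:ℝ) / k) * f (v 0) = 0 := by simp
      rw [this]
      exact hvd0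
    · exact hvdpos r h
  have hk1 : (1:ℝ) ≤ (k:ℝ) := by exact_mod_cast hk
  -- strict antitonicity
  have hvanti : StrictAntiOn v (Ici 0) := by
    intro r₁ h₁ r₂ h₂ hlt
    have h1' : (0:ℝ) ≤ r₁ := mem_Ici.1 h₁
    have hsq : r₁^2 < r₂^2 := by nlinarith [mem_Ici.1 h₂]
    have hqlt : q r₁ < q r₂ := by
      have h2k : (0:ℝ) < 2*(k:ℝ) := by positivity
      exact (div_lt_div_iff_of_pos_right h2k).2 hsq
    exact hWanti _ _ (hq0 r₁) hqlt
  -- bounds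
  have hbounds : ∀ r ∈ Ici (0:ℝ), 0 < v r ∧ v r ≤ α := fun r _ => ⟨(hvmem r).1, (hvmem r).2⟩
  -- tendsto 0
  have hvtend : Tendsto v atTop (𝓝 (0:ℝ)) := by
    rw [Metric.tendsto_atTop]
    intro ε hε
    set ε' := min ε α with hε'def
    have hε'0 : 0 < ε' := lt_min hε hα0
    have hε'mem : ε' ∈ Ioc (0:ℝ) α := ⟨hε'0, min_le_right _ _⟩
    set B := max (G ε') 1 with hBdef
    have hB1 : (1:ℝ) ≤ B := le_max_right _ _
    have hGB : G ε' ≤ B := le_max_left _ _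
    refine ⟨2*(k:ℝ)*B, fun r hr => ?_⟩
    have hrpos : (0:ℝ) < r := lt_of_lt_of_le (by nlinarith) hr
    have hqr : G ε' < q r := by
      have h2k : (0:ℝ) < 2*(k:ℝ) := by positivity
      have hq'' : q r = r^2/(2*(k:ℝ)) := rfl
      rw [hq'', lt_div_iff₀ h2k]
      have hB0 : (0:ℝ) < B := by linarith
      have hple := pow_le_pow_left₀ (by positivity : (0:ℝ) ≤ 2*(k:ℝ)*B) hr 2
      have hkB : 1 ≤ (k:ℝ)*B := by nlinarith [hk1, hB1]
      have h1 : G ε' * (2*(k:ℝ)) ≤ B * (2*(k:ℝ)) := by nlinarith [hGB, h2k]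
      have h2 : B * (2*(k:ℝ)) < (2*(k:ℝ)*B)^2 := by
        nlinarith [hkB, mul_pos hk0 hB0, sq_nonneg ((k:ℝ)*B)]
      linarith
    have hlt : v r < ε' := by
      by_contra hle
      push_neg at hle
      rcases eq_or_lt_of_le hle with heq | hlt2
      · have := hGv r
        rw [← heq] at this
        linarith
      · have := hGanti hε'mem (hvmem r) hlt2
        rw [hGv r] at this; linarith
    rw [Real.dist_eq, sub_zero, abs_of_pos (hvmem r).1]
    exact lt_of_lt_of_le hlt (min_le_left _ _)
  -- second derivative inequality
  have hv2 : ∀ r : ℝ, 0 < r → deriv v r / r ≤ deriv (deriv v) r := by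
    intro r hr
    have hxm : v r ∈ Ioo (-δ) δ := hsub (hvmem r)
    have hfx : 0 < f (v r) := hfpos _ (hvmem r)
    have hfd : DifferentiableAt ℝ f (v r) :=
      (hf1.differentiableOn one_ne_zero).differentiableAt (isOpen_Ioo.mem_nhds hxm)
    have hc : HasDerivAt f (deriv f (v r)) (v r) := hfd.hasDerivAt
    have hc0 : 0 ≤ deriv f (v r) := mono_deriv_nonneg isOpen_Ioo hf2 hxm hc
    set cc := deriv f (v r) with hccdef
    have h1 : HasDerivAt (fun t : ℝ => -(t/(k:ℝ))) (-(1/(k:ℝ))) r := by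
      have := ((hasDerivAt_id r).div_const (k:ℝ)).neg
      exact this
    have h2 : HasDerivAt (fun t => f (v t)) (cc * (-(r/(k:ℝ)) * f (v r))) r :=
      hc.comp r (hvd r hr.le)
    have hprod : HasDerivAt (fun t => -(t/(k:ℝ)) * f (v t))
        (-(1/(k:ℝ)) * f (v r) + -(r/(k:ℝ)) * (cc * (-(r/(k:ℝ)) * f (v r)))) r := h1.mul h2
    have hev : deriv v =ᶠ[𝓝 r] fun t => -(t/(k:ℝ)) * f (v t) := by
      filter_upwards [isOpen_Ioi.mem_nhds hr] with t ht
      exact (hvd t (mem_Ici.2 (le_of_lt ht))).deriv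
    have hdd : deriv (deriv v) r
        = -(1/(k:ℝ)) * f (v r) + -(r/(k:ℝ)) * (cc * (-(r/(k:ℝ)) * f (v r))) := by
      rw [hev.deriv_eq]; exact hprod.deriv
    have hdv : deriv v r = -(r/(k:ℝ)) * f (v r) := (hvd r hr.le).deriv
    rw [hdd, hdv]
    have hrne : r ≠ 0 := ne_of_gt hr
    have hkne : (k:ℝ) ≠ 0 := ne_of_gt hk0
    have hq3 : (-(r/(k:ℝ)) * f (v r))/r = -(1/(k:ℝ)) * f (v r) := by
      field_simp
    rw [hq3]
    nlinarith [mul_nonneg (mul_nonneg (div_nonneg hr.le hk0.le) (div_nonneg hr.le hk0.le))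
      (mul_nonneg hc0 hfx.le)]
  -- uniqueness
  have huniq : ∀ w₂ : ℝ → ℝ, (∀ r ∈ Ici (0:ℝ), HasDerivAt w₂ (-(r/(k:ℝ)) * f (w₂ r)) r) →
      w₂ 0 = α → ∀ r ∈ Ici (0:ℝ), w₂ r = v r := by
    intro w₂ hw₂d hw₂0 b hbmem
    rw [mem_Ici] at hbmem
    set S := {r : ℝ | r ∈ Icc 0 b ∧ EqOn w₂ v (Icc 0 r)} with hSdef
    have hS0 : (0:ℝ) ∈ S := by
      refine ⟨⟨le_rfl, hbmem⟩, ?_⟩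
      intro t' ht'
      have : t' = 0 := le_antisymm ht'.2 ht'.1
      rw [this, hw₂0, hv0]
    have hSne : S.Nonempty := ⟨0, hS0⟩
    have hSbdd : BddAbove S := ⟨b, fun x hx => hx.1.2⟩
    set m := sSup S with hmdef
    have hm0 : 0 ≤ m := le_csSup hSbdd hS0
    have hmb : m ≤ b := csSup_le hSne (fun x hx => hx.1.2)
    have hmEqlt : ∀ t', 0 ≤ t' → t' < m → w₂ t' = v t' := by
      intro t' ht' htm
      obtain ⟨s', hs'S, hs't⟩ := exists_lt_of_lt_csSup hSne htm
      exact hs'S.2 ⟨ht', hs't.le⟩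
    have hmEq : EqOn w₂ v (Icc 0 m) := by
      intro t' ht'
      rcases lt_or_eq_of_le ht'.2 with h | h
      · exact hmEqlt t' ht'.1 h
      · rw [h]
        rcases eq_or_lt_of_le hm0 with h0 | h0
        · rw [← h0, hw₂0, hv0]
        · have hlim1 : Tendsto w₂ (𝓝[<] m) (𝓝 (w₂ m)) :=
            ((hw₂d m (le_of_lt h0)).continuousAt).continuousWithinAt.tendsto
          have hlim2 : Tendsto v (𝓝[<] m) (𝓝 (v m)) :=
            ((hvd m (le_of_lt h0)).continuousAt).continuousWithinAt.tendsto
          have hEqev : w₂ =ᶠ[𝓝[<] m] v := by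
            filter_upwards [Ioo_mem_nhdsLT_of_mem (⟨h0, le_rfl⟩ : m ∈ Ioc 0 m)] with s' hs'
            exact hmEqlt s' hs'.1.le hs'.2
          exact tendsto_nhds_unique (hlim1.congr' hEqev) hlim2
    have hmbEq : m = b := by
      by_contra hne
      have hmb' : m < b := lt_of_le_of_ne hmb hne
      have hx₀mem : v m ∈ Ioo (-δ) δ := hsub (hvmem m)
      obtain ⟨K, t, ht, hK⟩ :=
        (hf1.contDiffAt (isOpen_Ioo.mem_nhds hx₀mem)).exists_lipschitzOnWith
      have hw₂m : w₂ m = v m := hmEq ⟨hm0, le_rfl⟩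
      have hev1 : ∀ᶠ r in 𝓝 m, w₂ r ∈ t := by
        have hcw : ContinuousAt w₂ m := (hw₂d m hm0).continuousAt
        apply hcw.eventually_mem
        rw [hw₂m]; exact ht
      have hev2 : ∀ᶠ r in 𝓝 m, v r ∈ t := ((hvd m hm0).continuousAt).eventually_mem ht
      obtain ⟨η, hη, hball⟩ := Metric.eventually_nhds_iff_ball.1 (hev1.and hev2)
      set b' := min b (m + η/2) with hb'def
      have hmb'' : m < b' := lt_min hmb' (by linarith)
      have hb'b : b' ≤ b := min_le_left _ _
      set V : ℝ → ℝ → ℝ := fun s x => -(max 0 (min s b) / (k:ℝ)) * f x with hVdef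
      set KV : NNReal := ⟨b / (k:ℝ), div_nonneg hbmem hk0.le⟩ * K with hKVdef
      have hVlip : ∀ s, LipschitzOnWith KV (V s) t := by
        intro s
        rw [lipschitzOnWith_iff_dist_le_mul]
        intro x hx y hy
        have hd := LipschitzOnWith.dist_le_mul hK x hx y hy
        have hc0 : 0 ≤ max 0 (min s b) := le_max_left _ _
        have hcb : max 0 (min s b) ≤ b := max_le hbmem (min_le_right _ _)
        rw [Real.dist_eq, Real.dist_eq] at hd ⊢
        have hxy : V s x - V s y = -(max 0 (min s b) / (k:ℝ)) * (f x - f y) := by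
          rw [hVdef]; ring
        rw [hxy, abs_mul, abs_neg, abs_of_nonneg (div_nonneg hc0 hk0.le)]
        have hcoe : ((KV : NNReal) : ℝ) = b / (k:ℝ) * (K:ℝ) := by
          rw [hKVdef]; push_cast; rfl
        rw [hcoe]
        calc (max 0 (min s b) / (k:ℝ)) * |f x - f y| ≤ (b / (k:ℝ)) * |f x - f y| := by
              apply mul_le_mul_of_nonneg_right _ (abs_nonneg _)
              exact (div_le_div_iff_of_pos_right hk0).2 hcb
          _ ≤ (b/(k:ℝ)) * ((K:ℝ) * |x - y|) :=
              mul_le_mul_of_nonneg_left hd (div_nonneg hbmem hk0.le)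
          _ = b / (k:ℝ) * (K:ℝ) * |x - y| := by ring
      have hdist : ∀ r ∈ Ico m b', r ∈ Metric.ball m η := by
        intro r hr
        rw [Metric.mem_ball, Real.dist_eq, abs_of_nonneg (by linarith [hr.1])]
        have h1 : r < b' := hr.2
        have h2 : b' ≤ m + η/2 := min_le_right _ _
        linarith
      have hVval : ∀ r ∈ Ico m b', ∀ z : ℝ, V r z = -(r/(k:ℝ)) * f z := by
        intro r hr z
        have hmax : max 0 (min r b) = r := by
          rw [min_eq_left (le_trans hr.2.le hb'b), max_eq_right (le_trans hm0 hr.1)]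
        show -(max 0 (min r b) / (k:ℝ)) * f z = -(r/(k:ℝ)) * f z
        rw [hmax]
      have hEq2 : EqOn w₂ v (Icc m b') := by
        apply ODE_solution_unique_of_mem_Icc_right (s := fun _ => t) (fun s _ => hVlip s)
          (fun r hr => ((hw₂d r (le_trans hm0 hr.1)).continuousAt).continuousWithinAt)
          ?_ (fun r hr => (hball r (hdist r hr)).1)
          (fun r hr => ((hvd r (le_trans hm0 hr.1)).continuousAt).continuousWithinAt)
          ?_ (fun r hr => (hball r (hdist r hr)).2) hw₂m
        · intro r hr
          rw [hVval r hr]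
          exact (hw₂d r (le_trans hm0 hr.1)).hasDerivWithinAt
        · intro r hr
          rw [hVval r hr]
          exact (hvd r (le_trans hm0 hr.1)).hasDerivWithinAt
      have hb'S : b' ∈ S := by
        refine ⟨⟨le_trans hm0 hmb''.le, hb'b⟩, ?_⟩
        intro t' ht'
        rcases le_or_gt t' m with h | h
        · exact hmEq ⟨ht'.1, h⟩
        · exact hEq2 ⟨h.le, ht'.2⟩
      linarith [le_csSup hSbdd hb'S]
    exact hmEq ⟨hbmem, hmbEq ▸ le_rfl⟩
  exact ⟨v, hvd, hv0, hvanti, hbounds, hvtend, hv2, huniq⟩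
end

section
/- Let N ≥ 2 and 1 ≤ k ≤ N−1, and let α ∈ (0, 1/√3]. Define u_α : ℝ^N → ℝ by u_α(x) = 1/√(1 + C e^{|x|²/k}), where C = (1 − α²)/α². Then u_α is a C² radial function with u_α(0) = α, 0 < u_α(x) < 1 for all x, u_α(x) → 0 as |x| → ∞, and u_α is a classical solution of P⁻_k(D²u) + u − u³ = 0 in ℝ^N, i.e. P⁻_k(D²u_α(x)) + u_α(x) − u_α(x)³ = 0 for every x ∈ ℝ^N. -/
open Real

section OneD
variable (c K : ℝ)

noncomputable def hh (s : ℝ) : ℝ := 1 + c * Real.exp (s / K)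
noncomputable def FF (s : ℝ) : ℝ := hh c K s ^ (-(1/2) : ℝ)
noncomputable def FF1 (s : ℝ) : ℝ :=
  (-(1/2) : ℝ) * hh c K s ^ (-(3/2) : ℝ) * (c / K * Real.exp (s / K))
noncomputable def FF2 (s : ℝ) : ℝ :=
  (-(1/2) : ℝ) * ((-(3/2) : ℝ) * hh c K s ^ (-(5/2) : ℝ) * (c / K * Real.exp (s / K))
      * (c / K * Real.exp (s / K))
    + hh c K s ^ (-(3/2) : ℝ) * (c / K * Real.exp (s / K) / K))

variable {c K}

theorem hh_pos (hc : 2 ≤ c) (s : ℝ) : 0 < hh c K s := by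
  have h1 := Real.exp_pos (s / K)
  have : 0 < c * Real.exp (s / K) := by nlinarith
  unfold hh; linarith

theorem hasDerivAt_hh (s : ℝ) : HasDerivAt (hh c K) (c / K * Real.exp (s / K)) s := by
  have h1 : HasDerivAt (fun s : ℝ => s / K) (1 / K) s := by
    simpa using (hasDerivAt_id s).div_const K
  have h2 : HasDerivAt (fun s : ℝ => Real.exp (s / K)) (Real.exp (s / K) * (1 / K)) s :=
    h1.exp
  have h3 := (h2.const_mul c).const_add 1
  exact h3.congr_deriv (by ring)

theorem hasDerivAt_FF (hc : 2 ≤ c) (s : ℝ) : HasDerivAt (FF c K) (FF1 c K s) s := by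
  have h := (hasDerivAt_hh (c := c) (K := K) s).rpow_const (p := (-(1/2) : ℝ))
    (Or.inl (ne_of_gt (hh_pos hc s)))
  refine h.congr_deriv (Eq.symm ?_)
  unfold FF1
  norm_num
  ring_nf

theorem hasDerivAt_FF1 (hc : 2 ≤ c) (s : ℝ) : HasDerivAt (FF1 c K) (FF2 c K s) s := by
  have h := (hasDerivAt_hh (c := c) (K := K) s).rpow_const (p := (-(3/2) : ℝ))
    (Or.inl (ne_of_gt (hh_pos hc s)))
  have hE : HasDerivAt (fun s : ℝ => c / K * Real.exp (s / K))
      (c / K * (Real.exp (s / K) / K)) s := by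
    have h1 : HasDerivAt (fun s : ℝ => s / K) (1 / K) s := by
      simpa using (hasDerivAt_id s).div_const K
    have h2 := h1.exp
    exact (h2.const_mul (c / K)).congr_deriv (by ring)
  have hfun : FF1 c K = fun y => (-(1/2) : ℝ) *
      (hh c K y ^ (-(3/2) : ℝ) * (c / K * Real.exp (y / K))) := by
    funext y; rw [FF1]; ring
  have h3 := ((h.mul hE).const_mul ((-(1/2)) : ℝ))
  rw [hfun]
  refine h3.congr_deriv (Eq.symm ?_)
  rw [FF2]
  norm_num
  ring_nf

theorem FF_eq_sqrt (hc : 2 ≤ c) (s : ℝ) : FF c K s = 1 / Real.sqrt (hh c K s) := by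
  rw [FF, Real.sqrt_eq_rpow, Real.rpow_neg (hh_pos hc s).le, one_div, one_div]

theorem key_identity (hc : 2 ≤ c) (hK : 0 < K) (s : ℝ) :
    2 * K * FF1 c K s + FF c K s - FF c K s ^ 3 = 0 := by
  have hpos := hh_pos (K := K) hc s
  have h3 : FF c K s ^ 3 = hh c K s ^ (-(3/2) : ℝ) := by
    rw [FF, ← Real.rpow_natCast (hh c K s ^ (-(1/2) : ℝ)) 3, ← Real.rpow_mul hpos.le]
    norm_num
  have hKne : K ≠ 0 := ne_of_gt hK
  have hce : c * Real.exp (s / K) = hh c K s - 1 := by unfold hh; ring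
  have h12 : hh c K s ^ (-(1/2) : ℝ) = hh c K s * hh c K s ^ (-(3/2) : ℝ) := by
    rw [← Real.rpow_one_add' hpos.le (by norm_num)]
    norm_num
  rw [h3, FF, FF1, h12]
  generalize hh c K s ^ (-(3/2) : ℝ) = t
  have e1 : 2 * K * ((-(1/2) : ℝ) * t * (c / K * Real.exp (s / K)))
      = -(t * (c * Real.exp (s / K))) := by
    field_simp
  rw [e1, hce]
  ring

theorem FF2_nonneg (hc : 2 ≤ c) (hK : 0 < K) (s : ℝ) (hs : 0 ≤ s) : 0 ≤ FF2 c K s := by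
  have hpos := hh_pos (K := K) hc s
  have hE : 2 ≤ c * Real.exp (s / K) := by
    nlinarith [Real.one_le_exp (by positivity : (0:ℝ) ≤ s / K)]
  have h35 : hh c K s ^ (-(3/2) : ℝ) = hh c K s * hh c K s ^ (-(5/2) : ℝ) := by
    rw [← Real.rpow_one_add' hpos.le (by norm_num)]
    norm_num
  rw [FF2, h35]
  have h5 : 0 < hh c K s ^ (-(5/2) : ℝ) := Real.rpow_pos_of_pos hpos _
  have hexp := Real.exp_pos (s / K)
  have hKne : K ≠ 0 := ne_of_gt hK
  have heq : (-(1/2) : ℝ) * ((-(3/2) : ℝ) * hh c K s ^ (-(5/2) : ℝ) * (c / K * Real.exp (s / K))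
        * (c / K * Real.exp (s / K))
      + hh c K s * hh c K s ^ (-(5/2) : ℝ) * (c / K * Real.exp (s / K) / K))
      = hh c K s ^ (-(5/2) : ℝ) * (c * Real.exp (s / K)) * (c * Real.exp (s / K) - 2)
        / (4 * K ^ 2) := by
    rw [hh]
    field_simp
    ring
  rw [heq]
  apply div_nonneg _ (by positivity)
  apply mul_nonneg (by positivity)
  linarith

theorem contDiff_FF (hc : 2 ≤ c) : ContDiff ℝ 2 (FF c K) := by
  rw [contDiff_iff_contDiffAt]
  intro s
  apply ContDiffAt.rpow_const_of_ne
  · exact (contDiff_const.add (contDiff_const.mul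
      (Real.contDiff_exp.comp (contDiff_id.div_const K)))).contDiffAt
  · exact ne_of_gt (hh_pos hc s)

end OneD

section TwoD
open Real
variable {c K : ℝ} {N : ℕ}

theorem hasFDerivAt_U (hc : 2 ≤ c) (y : EuclideanSpace ℝ (Fin N)) :
    HasFDerivAt (fun z : EuclideanSpace ℝ (Fin N) => FF c K (‖z‖ ^ 2))
      (FF1 c K (‖y‖ ^ 2) • (2 • (innerSL ℝ y))) y := by
  have h1 : HasFDerivAt (fun z : EuclideanSpace ℝ (Fin N) => ‖z‖ ^ 2)
      (2 • (innerSL ℝ y)) y := (hasStrictFDerivAt_norm_sq y).hasFDerivAt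
  have h2 := (hasDerivAt_FF (c := c) (K := K) hc (‖y‖ ^ 2)).comp_hasFDerivAt y h1
  exact h2

theorem contDiff_U (hc : 2 ≤ c) :
    ContDiff ℝ 2 (fun z : EuclideanSpace ℝ (Fin N) => FF c K (‖z‖ ^ 2)) :=
  (contDiff_FF hc).comp (contDiff_norm_sq (𝕜 := ℝ))

theorem fderiv_U (hc : 2 ≤ c) :
    fderiv ℝ (fun z : EuclideanSpace ℝ (Fin N) => FF c K (‖z‖ ^ 2))
      = fun y => FF1 c K (‖y‖ ^ 2) • (2 • (innerSL ℝ y)) :=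
  funext fun y => (hasFDerivAt_U hc y).fderiv

theorem hess_U (hc : 2 ≤ c) (x : EuclideanSpace ℝ (Fin N)) (i j : Fin N) :
    hess (fun z : EuclideanSpace ℝ (Fin N) => FF c K (‖z‖ ^ 2)) x i j
      = 2 * FF1 c K (‖x‖ ^ 2) * (if i = j then 1 else 0)
        + 4 * FF2 c K (‖x‖ ^ 2) * x i * x j := by
  classical
  set U : EuclideanSpace ℝ (Fin N) → ℝ := fun z => FF c K (‖z‖ ^ 2) with hUdef
  set ei : EuclideanSpace ℝ (Fin N) := EuclideanSpace.single i 1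
  set ej : EuclideanSpace ℝ (Fin N) := EuclideanSpace.single j 1
  have hdiff2 : DifferentiableAt ℝ (fderiv ℝ U) x := by
    have := ((contDiff_U (K := K) (N := N) hc).fderiv_right
      (m := 1) (by norm_num)).differentiable (by norm_num)
    exact this x
  have h0 : hess U x i j = fderiv ℝ (fderiv ℝ U) x ei ej := by
    rw [hess, iteratedFDeriv_two_apply]
    simp
    rfl
  -- exchange: fderiv of evaluation
  have h1 : fderiv ℝ (fun y => (fderiv ℝ U y) ej) x
      = (fderiv ℝ (fderiv ℝ U) x).flip ej := by
    have := fderiv_clm_apply (c := fderiv ℝ U) (u := fun _ => ej) hdiff2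
      (differentiableAt_const _)
    rw [this]
    simp
  -- the scalar function y ↦ fderiv U y ej
  have h2 : (fun y => (fderiv ℝ U y) ej)
      = fun y : EuclideanSpace ℝ (Fin N) => FF1 c K (‖y‖ ^ 2) * (2 * y j) := by
    funext y
    rw [fderiv_U hc]
    simp [ej, real_inner_comm, EuclideanSpace.inner_single_right]
  -- derivative of that scalar function
  have h3 : HasFDerivAt (fun y : EuclideanSpace ℝ (Fin N) => FF1 c K (‖y‖ ^ 2) * (2 * y j))
      ((FF1 c K (‖x‖ ^ 2)) • ((2:ℝ) • (EuclideanSpace.proj j (𝕜 := ℝ)))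
        + (2 * x j) • (FF2 c K (‖x‖ ^ 2) • (2 • (innerSL ℝ x)))) x := by
    have hA : HasFDerivAt (fun y : EuclideanSpace ℝ (Fin N) => FF1 c K (‖y‖ ^ 2))
        (FF2 c K (‖x‖ ^ 2) • (2 • (innerSL ℝ x))) x := by
      have h1 : HasFDerivAt (fun z : EuclideanSpace ℝ (Fin N) => ‖z‖ ^ 2)
          (2 • (innerSL ℝ x)) x := (hasStrictFDerivAt_norm_sq x).hasFDerivAt
      exact
        (hasDerivAt_FF1 (c := c) (K := K) hc (‖x‖ ^ 2)).comp_hasFDerivAt x h1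
    have hB : HasFDerivAt (fun y : EuclideanSpace ℝ (Fin N) => 2 * y j)
        ((2:ℝ) • (EuclideanSpace.proj j (𝕜 := ℝ))) x := by
      exact ((EuclideanSpace.proj j (𝕜 := ℝ)).hasFDerivAt (x := x)).const_mul 2
    exact hA.mul hB
  calc hess U x i j = fderiv ℝ (fun y => (fderiv ℝ U y) ej) x ei := by
        rw [h0, h1]; rfl
    _ = 2 * FF1 c K (‖x‖ ^ 2) * (if i = j then 1 else 0)
        + 4 * FF2 c K (‖x‖ ^ 2) * x i * x j := by
        rw [h2, h3.fderiv]
        simp [ei, real_inner_comm, EuclideanSpace.single_apply, EuclideanSpace.inner_single_right]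
        by_cases hij : i = j
        · subst hij; simp; ring
        · simp [hij, Ne.symm hij]; ring
end TwoD
section TruncLap
open Finset

theorem truncLap_eq {N k : ℕ} (hk : k + 1 ≤ N) (a b : ℝ) (hb : 0 ≤ b)
    (x : EuclideanSpace ℝ (Fin N)) (M : Matrix (Fin N) (Fin N) ℝ)
    (hM : ∀ i j, M i j = a * (if i = j then 1 else 0) + b * x i * x j) :
    truncLap k M = k * a := by
  classical
  have key : ∀ w : Fin N → ℝ,
      dotProduct (M.mulVec w) w
        = a * dotProduct w w
          + b * (dotProduct (fun i => x i) w) ^ 2 := by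
    intro w
    have hrow : ∀ p, M.mulVec w p = a * w p + b * x p * (∑ q, x q * w q) := by
      intro p
      simp only [Matrix.mulVec, dotProduct, hM, add_mul, mul_ite, ite_mul, mul_one,
        mul_zero, zero_mul, Finset.sum_add_distrib, Finset.sum_ite_eq, Finset.mem_univ,
        if_true]
      rw [Finset.mul_sum]
      congr 1
      exact Finset.sum_congr rfl fun q _ => by ring
    simp only [dotProduct]
    calc ∑ p, M.mulVec w p * w p
        = ∑ p, (a * (w p * w p) + (b * (∑ q, x q * w q)) * (x p * w p)) :=
          Finset.sum_congr rfl fun p _ => by rw [hrow]; ring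
      _ = a * (∑ p, w p * w p) + b * (∑ q, x q * w q) ^ 2 := by
          rw [Finset.sum_add_distrib, ← Finset.mul_sum, ← Finset.mul_sum]
          ring
  -- lower bound
  have hlb : ∀ s ∈ { s : ℝ | ∃ v : Fin k → (Fin N → ℝ),
      (∀ i j, dotProduct (v i) (v j) = if i = j then (1 : ℝ) else 0) ∧
      s = ∑ i, dotProduct (M.mulVec (v i)) (v i) }, (k : ℝ) * a ≤ s := by
    rintro s ⟨v, hON, rfl⟩
    have : ∀ i : Fin k, a ≤ dotProduct (M.mulVec (v i)) (v i) := by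
      intro i
      rw [key, hON i i, if_pos rfl, mul_one]
      nlinarith [sq_nonneg (dotProduct (fun j => x j) (v i))]
    calc (k : ℝ) * a = ∑ _i : Fin k, a := by
          rw [Finset.sum_const, Finset.card_univ, Fintype.card_fin, nsmul_eq_mul]
      _ ≤ _ := Finset.sum_le_sum fun i _ => this i
  -- the witness family
  set W : Submodule ℝ (EuclideanSpace ℝ (Fin N)) := (ℝ ∙ x)ᗮ with hW
  have hfr : k ≤ Module.finrank ℝ W := by
    have h1 : Module.finrank ℝ (ℝ ∙ x) ≤ 1 := by
      simpa using finrank_span_le_card (R := ℝ) ({x} : Set (EuclideanSpace ℝ (Fin N)))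
    have h2 := Submodule.finrank_add_finrank_orthogonal (K := (ℝ ∙ x))
    rw [finrank_euclideanSpace_fin, ← hW] at h2
    omega
  set B := stdOrthonormalBasis ℝ W with hB
  set v : Fin k → (Fin N → ℝ) :=
    fun i => fun j => ((B (Fin.castLE hfr i) : W) : EuclideanSpace ℝ (Fin N)) j with hv
  have hdot : ∀ (y z : EuclideanSpace ℝ (Fin N)),
      dotProduct (fun j => y j) (fun j => z j) = (inner ℝ y z : ℝ) := by
    intro y z
    simp [dotProduct, PiLp.inner_apply, RCLike.inner_apply, conj_trivial, mul_comm]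
  have hON : ∀ i j, dotProduct (v i) (v j) = if i = j then (1 : ℝ) else 0 := by
    intro i j
    rw [hv, hdot]
    have h4 := orthonormal_iff_ite.1 B.orthonormal (Fin.castLE hfr i) (Fin.castLE hfr j)
    rw [Submodule.coe_inner] at h4
    rw [h4]
    simp [Fin.castLE_inj]
  have hperp : ∀ i, dotProduct (fun j => x j) (v i) = 0 := by
    intro i
    rw [hv, hdot]
    have h3 : ((B (Fin.castLE hfr i) : W) : EuclideanSpace ℝ (Fin N)) ∈ (ℝ ∙ x)ᗮ :=
      (B (Fin.castLE hfr i)).2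
    exact (Submodule.mem_orthogonal _ _).1 h3 x (Submodule.mem_span_singleton_self x)
  have hmem : (k : ℝ) * a ∈ { s : ℝ | ∃ v : Fin k → (Fin N → ℝ),
      (∀ i j, dotProduct (v i) (v j) = if i = j then (1 : ℝ) else 0) ∧
      s = ∑ i, dotProduct (M.mulVec (v i)) (v i) } := by
    refine ⟨v, hON, ?_⟩
    have : ∀ i : Fin k, dotProduct (M.mulVec (v i)) (v i) = a := by
      intro i
      rw [key, hON i i, if_pos rfl, hperp i]
      ring
    rw [Finset.sum_congr rfl fun i _ => this i, Finset.sum_const, Finset.card_univ,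
      Fintype.card_fin, nsmul_eq_mul]
  exact le_antisymm (csInf_le ⟨(k : ℝ) * a, hlb⟩ hmem) (le_csInf ⟨_, hmem⟩ hlb)

end TruncLap

/-- for `α ∈ (0, 1/√3]`, the radial function
`u_α(x) = (1 + C e^{|x|²/k})^{-1/2}` with `C = (1-α²)/α²` is a C² radial function with
`u_α(0) = α`, `0 < u_α < 1`, `u_α(x) → 0` as `|x| → ∞`, and is a classical solution of
`P⁻ₖ(D²u) + u - u³ = 0` in `ℝ^N`. -/
theorem stmt13 {n : ℕ} (k : ℕ) (hk1 : 1 ≤ k) (hk2 : k ≤ n + 1)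
    (α : ℝ) (hα : α ∈ Set.Ioc (0 : ℝ) (Real.sqrt 3)⁻¹)
    (u : EuclideanSpace ℝ (Fin (n + 2)) → ℝ)
    (hu : ∀ x, u x = 1 / Real.sqrt (1 + (1 - α ^ 2) / α ^ 2 * Real.exp (‖x‖ ^ 2 / k))) :
    ContDiff ℝ 2 u ∧ (∃ v : ℝ → ℝ, ∀ x, u x = v ‖x‖) ∧ u 0 = α ∧
    (∀ x, 0 < u x ∧ u x < 1) ∧
    Filter.Tendsto u (Filter.comap norm Filter.atTop) (nhds 0) ∧
    (∀ x, truncLap k (hess u x) + u x - (u x) ^ 3 = 0) := by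
  obtain ⟨hα0, hα1⟩ := hα
  set c : ℝ := (1 - α ^ 2) / α ^ 2 with hcdef
  set K : ℝ := (k : ℝ) with hKdef
  have hα2 : (0:ℝ) < α ^ 2 := by positivity
  have hα3 : α ^ 2 ≤ 1 / 3 := by
    have h1 : α ^ 2 ≤ ((Real.sqrt 3)⁻¹) ^ 2 := by
      apply pow_le_pow_left₀ hα0.le hα1
    have h2 : ((Real.sqrt 3)⁻¹) ^ 2 = 1 / 3 := by
      rw [inv_pow, Real.sq_sqrt (by norm_num : (3:ℝ) ≥ 0)]
      norm_num
    linarith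
  have hc : 2 ≤ c := by
    rw [hcdef, le_div_iff₀ hα2]
    nlinarith
  have hK : 0 < K := by
    rw [hKdef]
    exact_mod_cast hk1
  have hueq : u = fun z : EuclideanSpace ℝ (Fin (n + 2)) => FF c K (‖z‖ ^ 2) := by
    funext z
    rw [hu z, FF_eq_sqrt hc, hh]
  refine ⟨?_, ⟨fun r => FF c K (r ^ 2), fun x => by rw [hueq]⟩, ?_, ?_, ?_, ?_⟩
  · rw [hueq]; exact contDiff_U hc
  · rw [hu 0]
    have h0 : ‖(0 : EuclideanSpace ℝ (Fin (n + 2)))‖ = 0 := norm_zero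
    rw [h0]
    have hKne : K ≠ 0 := ne_of_gt hK
    rw [show (0:ℝ) ^ 2 / (k:ℝ) = 0 by simp, Real.exp_zero, mul_one]
    rw [show (1:ℝ) + (1 - α ^ 2) / α ^ 2 = (1 / α) ^ 2 by field_simp; ring]
    rw [Real.sqrt_sq (by positivity)]
    field_simp
  · intro x
    rw [hu x]
    have he := Real.exp_pos (‖x‖ ^ 2 / (k:ℝ))
    have h1 : (1:ℝ) < 1 + c * Real.exp (‖x‖ ^ 2 / (k:ℝ)) := by nlinarith
    have h2 : (1:ℝ) < Real.sqrt (1 + c * Real.exp (‖x‖ ^ 2 / (k:ℝ))) := by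
      have h3 := Real.sqrt_lt_sqrt (by norm_num : (0:ℝ) ≤ 1) h1
      rwa [Real.sqrt_one] at h3
    constructor
    · positivity
    · rw [div_lt_one (by linarith)]
      linarith
  · rw [hueq]
    have hsq : Filter.Tendsto (fun r : ℝ => Real.sqrt r) Filter.atTop Filter.atTop := by
      apply Filter.tendsto_atTop_atTop_of_monotone (fun a b hab => Real.sqrt_le_sqrt hab)
      intro b
      exact ⟨(max b 0) ^ 2, by
        rw [Real.sqrt_sq (le_max_right b 0)]; exact le_max_left b 0⟩
    have h1 : Filter.Tendsto (fun r : ℝ => Real.sqrt (hh c K (r ^ 2)))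
        Filter.atTop Filter.atTop := by
      apply hsq.comp
      have : Filter.Tendsto (fun r : ℝ => 1 + c * Real.exp (r ^ 2 / K))
          Filter.atTop Filter.atTop := by
        apply Filter.tendsto_atTop_add_const_left
        apply Filter.Tendsto.const_mul_atTop (by linarith : (0:ℝ) < c)
        exact Real.tendsto_exp_atTop.comp
          ((Filter.tendsto_pow_atTop (two_ne_zero)).atTop_div_const hK)
      exact this
    have h2 : Filter.Tendsto (fun r : ℝ => FF c K (r ^ 2)) Filter.atTop (nhds 0) := by
      have h3 := h1.inv_tendsto_atTop
      have : (fun r : ℝ => FF c K (r ^ 2)) = (fun r : ℝ => (Real.sqrt (hh c K (r ^ 2)))⁻¹) := by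
        funext r
        rw [FF_eq_sqrt hc, one_div]
      rw [this]
      exact h3
    exact h2.comp Filter.tendsto_comap
  · intro x
    rw [hueq]
    have hb : (0:ℝ) ≤ 4 * FF2 c K (‖x‖ ^ 2) :=
      mul_nonneg (by norm_num) (FF2_nonneg hc hK _ (by positivity))
    have hk' : k + 1 ≤ n + 2 := by omega
    rw [truncLap_eq hk' (2 * FF1 c K (‖x‖ ^ 2)) (4 * FF2 c K (‖x‖ ^ 2)) hb x _
      (fun i j => hess_U hc x i j)]
    have hkey := key_identity hc hK (‖x‖ ^ 2)
    rw [hKdef] at hkey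
    linarith
end

section
/- Let N ≥ 2 and 1 ≤ k ≤ N−1. For every N×N real symmetric matrix X there exists an N×N real symmetric positive semidefinite matrix M with M ≠ 0 such that P⁻_k(X + M) = P⁻_k(X). (One may take M = v_N v_Nᵀ, where v_N is a unit eigenvector of X corresponding to its largest eigenvalue.) -/
section
open Matrix Finset
lemma keyineq {N k : ℕ} (hk1 : 1 ≤ k) (hk : k ≤ N)
    (μ d : Fin N → ℝ) (hμ : Monotone μ)
    (hd0 : ∀ j, 0 ≤ d j) (hd1 : ∀ j, d j ≤ 1) (hsum : ∑ j, d j = k) :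
    ∑ i : Fin k, μ (Fin.castLE hk i) ≤ ∑ j, μ j * d j := by
  have hkN : k - 1 < N := by omega
  set t : ℝ := μ ⟨k - 1, hkN⟩ with ht
  set χ : Fin N → ℝ := fun j => if (j : ℕ) < k then 1 else 0 with hχ
  have hmap : (Finset.univ.map (Fin.castLEEmb hk)) =
      Finset.univ.filter (fun j : Fin N => (j : ℕ) < k) := by
    ext j
    simp only [Finset.mem_map, Finset.mem_univ, true_and, Finset.mem_filter,
      Fin.castLEEmb_apply]
    constructor
    · rintro ⟨i, rfl⟩; exact i.isLt
    · intro hj; exact ⟨⟨j, hj⟩, rfl⟩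
  have hfilter : ∀ f : Fin N → ℝ,
      ∑ j, f j * χ j = ∑ i : Fin k, f (Fin.castLE hk i) := by
    intro f
    have h1 : ∑ j, f j * χ j = ∑ j ∈ Finset.univ.filter (fun j : Fin N => (j : ℕ) < k), f j := by
      rw [Finset.sum_filter]
      refine Finset.sum_congr rfl fun j _ => ?_
      by_cases h : (j : ℕ) < k <;> simp [hχ, h]
    rw [h1, ← hmap, Finset.sum_map]
    rfl
  have hχsum : ∑ j, χ j = k := by
    have := hfilter (fun _ => 1)
    simpa using this
  have hterm : ∀ j, 0 ≤ (μ j - t) * (d j - χ j) := by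
    intro j
    by_cases h : (j : ℕ) < k
    · have h1 : μ j ≤ t := hμ (by simp [Fin.le_def]; omega)
      have h2 : d j - χ j ≤ 0 := by simp [hχ, h]; linarith [hd1 j]
      nlinarith
    · have h1 : t ≤ μ j := hμ (by simp [Fin.le_def]; omega)
      have h2 : 0 ≤ d j - χ j := by simp [hχ, h]; linarith [hd0 j]
      exact mul_nonneg (by linarith) h2
  have hexp : ∑ j, (μ j - t) * (d j - χ j)
      = ∑ j, μ j * d j - ∑ j, μ j * χ j := by
    have : ∀ j, (μ j - t) * (d j - χ j)
        = μ j * d j - μ j * χ j - t * d j + t * χ j := by intro j; ring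
    simp only [this, Finset.sum_add_distrib, Finset.sum_sub_distrib, ← Finset.mul_sum,
      hsum, hχsum]
    ring
  have : (0:ℝ) ≤ ∑ j, (μ j - t) * (d j - χ j) := Finset.sum_nonneg (fun j _ => hterm j)
  rw [hexp] at this
  rw [← hfilter μ]
  linarith

section
variable {N : ℕ}

lemma inner_eq_dot (x y : EuclideanSpace ℝ (Fin N)) :
    (inner ℝ x y : ℝ) = dotProduct (α := ℝ) x y := by
  rw [EuclideanSpace.inner_eq_star_dotProduct, star_trivial, dotProduct_comm]

variable {X : Matrix (Fin N) (Fin N) ℝ} (hX : X.IsHermitian)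

lemma eigdot (p q : Fin N) :
    dotProduct (α := ℝ) (hX.eigenvectorBasis p) (hX.eigenvectorBasis q)
      = if p = q then 1 else 0 := by
  rw [← inner_eq_dot]
  exact orthonormal_iff_ite.mp hX.eigenvectorBasis.orthonormal p q

lemma quadform (w : Fin N → ℝ) :
    dotProduct (X *ᵥ w) w
      = ∑ j, hX.eigenvalues j *
          (dotProduct (α := ℝ) (hX.eigenvectorBasis j) w) ^ 2 := by
  have hXt : Xᵀ = X := by
    conv_rhs => rw [← hX]
    rw [Matrix.conjTranspose_eq_transpose_of_trivial]
  have hsum := hX.eigenvectorBasis.sum_inner_mul_inner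
    ((WithLp.equiv 2 _).symm (X *ᵥ w)) ((WithLp.equiv 2 _).symm w)
  rw [inner_eq_dot] at hsum
  rw [show dotProduct (X *ᵥ w) w
      = dotProduct (α := ℝ) ((WithLp.equiv 2 (Fin N → ℝ)).symm (X *ᵥ w))
        ((WithLp.equiv 2 (Fin N → ℝ)).symm w) from rfl, ← hsum]
  refine Finset.sum_congr rfl fun j _ => ?_
  rw [inner_eq_dot, inner_eq_dot]
  have h1 : dotProduct (α := ℝ) ((WithLp.equiv 2 (Fin N → ℝ)).symm (X *ᵥ w))
      (hX.eigenvectorBasis j)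
      = hX.eigenvalues j * dotProduct (α := ℝ) (hX.eigenvectorBasis j) w := by
    have : dotProduct (α := ℝ) (X *ᵥ w) (hX.eigenvectorBasis j)
        = dotProduct w (X *ᵥ (hX.eigenvectorBasis j : Fin N → ℝ)) := by
      rw [dotProduct_comm, Matrix.dotProduct_mulVec, ← Matrix.mulVec_transpose, hXt,
        dotProduct_comm]
    rw [show dotProduct (α := ℝ) ((WithLp.equiv 2 (Fin N → ℝ)).symm (X *ᵥ w))
        (hX.eigenvectorBasis j) = dotProduct (α := ℝ) (X *ᵥ w) (hX.eigenvectorBasis j)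
        from rfl, this]
    have he := hX.mulVec_eigenvectorBasis j
    rw [show X *ᵥ (hX.eigenvectorBasis j : Fin N → ℝ)
        = hX.eigenvalues j • (hX.eigenvectorBasis j : Fin N → ℝ) from by exact_mod_cast he]
    rw [dotProduct_smul, dotProduct_comm]
    simp [smul_eq_mul]
  rw [h1]
  have h2 : dotProduct (α := ℝ) (hX.eigenvectorBasis j)
      ((WithLp.equiv 2 (Fin N → ℝ)).symm w)
      = dotProduct (α := ℝ) (hX.eigenvectorBasis j) w := rfl
  rw [h2]; ring

/-- Ky Fan lower bound. -/
lemma kyFan {k : ℕ} (hk1 : 1 ≤ k) (hk : k ≤ N) (v : Fin k → (Fin N → ℝ))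
    (hv : ∀ i j, dotProduct (v i) (v j) = if i = j then (1 : ℝ) else 0) :
    ∑ i : Fin k, hX.eigenvalues (Tuple.sort hX.eigenvalues (Fin.castLE hk i))
      ≤ ∑ i, dotProduct (X.mulVec (v i)) (v i) := by
  set b := hX.eigenvectorBasis with hb
  set a : Fin k → Fin N → ℝ :=
    fun i j => dotProduct (α := ℝ) (b j) (v i) with ha
  set c : Fin N → ℝ := fun j => ∑ i, a i j ^ 2 with hc
  have hval : ∑ i, dotProduct (X.mulVec (v i)) (v i)
      = ∑ j, hX.eigenvalues j * c j := by
    have h1 : ∀ i, dotProduct (X.mulVec (v i)) (v i)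
        = ∑ j, hX.eigenvalues j * a i j ^ 2 := fun i => quadform hX (v i)
    simp only [h1, hc, Finset.mul_sum]
    rw [Finset.sum_comm]
  rw [hval]
  have horth : Orthonormal ℝ (fun i => (WithLp.equiv 2 (Fin N → ℝ)).symm (v i)) := by
    rw [orthonormal_iff_ite]
    intro i j
    rw [inner_eq_dot]
    exact hv i j
  have hadot : ∀ i j, (inner ℝ ((WithLp.equiv 2 (Fin N → ℝ)).symm (v i)) (b j) : ℝ) = a i j := by
    intro i j
    rw [inner_eq_dot]
    exact dotProduct_comm _ _
  have hc1 : ∀ j, c j ≤ 1 := by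
    intro j
    have hb1 : ‖b j‖ = 1 := hX.eigenvectorBasis.orthonormal.1 j
    have := horth.sum_inner_products_le (s := Finset.univ) (b j)
    simp only [hadot, Real.norm_eq_abs, sq_abs, hb1, one_pow] at this
    exact this
  have hc0 : ∀ j, 0 ≤ c j := fun j => Finset.sum_nonneg fun i _ => sq_nonneg _
  have hcsum : ∑ j, c j = k := by
    have h1 : ∀ i : Fin k, ∑ j, a i j ^ 2 = 1 := by
      intro i
      have := hX.eigenvectorBasis.sum_inner_mul_inner
        ((WithLp.equiv 2 (Fin N → ℝ)).symm (v i)) ((WithLp.equiv 2 (Fin N → ℝ)).symm (v i))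
      rw [inner_eq_dot] at this
      have h2 : dotProduct (α := ℝ) ((WithLp.equiv 2 (Fin N → ℝ)).symm (v i))
          ((WithLp.equiv 2 (Fin N → ℝ)).symm (v i)) = (1:ℝ) := by
        have := hv i i; simpa using this
      rw [h2] at this
      rw [← this]
      refine Finset.sum_congr rfl fun j _ => ?_
      rw [hadot, inner_eq_dot]
      rw [show dotProduct (α := ℝ) (b j) ((WithLp.equiv 2 (Fin N → ℝ)).symm (v i))
          = a i j from rfl]
      ring
    rw [hc, Finset.sum_comm]
    simp [h1]
  have hre : ∑ j, hX.eigenvalues j * c j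
      = ∑ j, (hX.eigenvalues ∘ (Tuple.sort hX.eigenvalues)) j * (c ∘ (Tuple.sort hX.eigenvalues)) j :=
    (Equiv.sum_comp (Tuple.sort hX.eigenvalues) (fun j => hX.eigenvalues j * c j)).symm
  rw [hre]
  have hdsum : ∑ j, (c ∘ (Tuple.sort hX.eigenvalues)) j = k := by
    rw [← hcsum]
    exact Equiv.sum_comp (Tuple.sort hX.eigenvalues) c
  exact keyineq hk1 hk _ _ (Tuple.monotone_sort hX.eigenvalues)
    (fun j => hc0 _) (fun j => hc1 _) hdsum

end

lemma vvMulVec {N : ℕ} (u w : Fin N → ℝ) :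
    Matrix.vecMulVec u u *ᵥ w = dotProduct u w • u := by
  funext i
  simp only [Matrix.mulVec, Matrix.vecMulVec_apply, dotProduct, Pi.smul_apply,
    smul_eq_mul, Finset.sum_mul]
  refine Finset.sum_congr rfl fun j _ => by ring

lemma vvQuad {N : ℕ} (u w : Fin N → ℝ) :
    dotProduct (Matrix.vecMulVec u u *ᵥ w) w = (dotProduct u w)^2 := by
  rw [vvMulVec, smul_dotProduct, smul_eq_mul, sq]

lemma vvPSD {N : ℕ} (u : Fin N → ℝ) : (Matrix.vecMulVec u u).PosSemidef := by
  have := Matrix.posSemidef_vecMulVec_self_star u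
  rwa [star_trivial] at this

lemma vvNeZero {N : ℕ} {u : Fin N → ℝ} (h : dotProduct u u = 1) :
    Matrix.vecMulVec u u ≠ 0 := by
  intro h0
  have h1 := vvQuad u u
  rw [h0, h] at h1
  simp at h1

/-- for every real symmetric `N×N` matrix `X` (N = n+2, 1 ≤ k ≤ N-1) there
is a nonzero positive semidefinite symmetric matrix `M` with `P⁻ₖ(X + M) = P⁻ₖ(X)`. -/
theorem stmt17 {n : ℕ} (k : ℕ) (hk1 : 1 ≤ k) (hk2 : k ≤ n + 1)
    (X : Matrix (Fin (n + 2)) (Fin (n + 2)) ℝ) (hX : X.IsHermitian) :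
    ∃ M : Matrix (Fin (n + 2)) (Fin (n + 2)) ℝ,
      M.PosSemidef ∧ M ≠ 0 ∧ truncLap k (X + M) = truncLap k X := by
  have hk : k ≤ n + 2 := by omega
  set fam : Fin k → (Fin (n+2) → ℝ) :=
    fun i => hX.eigenvectorBasis (Tuple.sort hX.eigenvalues (Fin.castLE hk i)) with hfam
  have hinj : ∀ i j : Fin k, (Tuple.sort hX.eigenvalues (Fin.castLE hk i)
      = Tuple.sort hX.eigenvalues (Fin.castLE hk j)) ↔ i = j := by
    intro i j
    constructor
    · intro h
      have h2 := (Tuple.sort hX.eigenvalues).injective h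
      have h3 := congrArg Fin.val h2
      simp only [Fin.coe_castLE] at h3
      exact Fin.ext h3
    · rintro rfl; rfl
  have hfamorth : ∀ i j, dotProduct (fam i) (fam j) = if i = j then (1:ℝ) else 0 := by
    intro i j
    rw [hfam]
    simp only [eigdot hX]
    simp [hinj i j]
  set u : Fin (n+2) → ℝ := (hX.eigenvectorBasis (Tuple.sort hX.eigenvalues ⟨n+1, by omega⟩)).ofLp with hu
  have huu : dotProduct u u = 1 := by
    rw [hu, eigdot hX]; simp
  have hufam : ∀ i : Fin k, dotProduct u (fam i) = 0 := by
    intro i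
    rw [hu, hfam, eigdot hX, if_neg]
    intro h
    have h2 := (Tuple.sort hX.eigenvalues).injective h
    have h3 := congrArg Fin.val h2
    simp only [Fin.coe_castLE] at h3
    have := i.isLt
    omega
  set M := Matrix.vecMulVec u u with hM
  have hMq : ∀ w : Fin (n+2) → ℝ, dotProduct (M *ᵥ w) w = (dotProduct u w)^2 :=
    fun w => vvQuad u w
  refine ⟨M, vvPSD u, vvNeZero huu, ?_⟩
  set m : ℝ := ∑ i : Fin k, hX.eigenvalues (Tuple.sort hX.eigenvalues (Fin.castLE hk i)) with hm
  have hXfam : ∀ i : Fin k, dotProduct (X *ᵥ fam i) (fam i)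
      = hX.eigenvalues (Tuple.sort hX.eigenvalues (Fin.castLE hk i)) := by
    intro i
    rw [hfam]
    rw [show X *ᵥ (hX.eigenvectorBasis (Tuple.sort hX.eigenvalues (Fin.castLE hk i)) : Fin (n+2) → ℝ)
        = hX.eigenvalues (Tuple.sort hX.eigenvalues (Fin.castLE hk i)) •
          (hX.eigenvectorBasis (Tuple.sort hX.eigenvalues (Fin.castLE hk i)) : Fin (n+2) → ℝ)
        from by exact_mod_cast hX.mulVec_eigenvectorBasis (Tuple.sort hX.eigenvalues (Fin.castLE hk i))]
    rw [smul_dotProduct, eigdot hX]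
    simp
  set SX := { s : ℝ | ∃ v : Fin k → (Fin (n+2) → ℝ),
    (∀ i j, dotProduct (v i) (v j) = if i = j then (1 : ℝ) else 0) ∧
    s = ∑ i, dotProduct (X.mulVec (v i)) (v i) } with hSX
  set SXM := { s : ℝ | ∃ v : Fin k → (Fin (n+2) → ℝ),
    (∀ i j, dotProduct (v i) (v j) = if i = j then (1 : ℝ) else 0) ∧
    s = ∑ i, dotProduct ((X + M).mulVec (v i)) (v i) } with hSXM
  have hmemX : m ∈ SX := ⟨fam, hfamorth, by
    rw [hm]; exact Finset.sum_congr rfl fun i _ => (hXfam i).symm⟩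
  have hXMval : ∀ w : Fin (n+2) → ℝ, dotProduct ((X + M).mulVec w) w
      = dotProduct (X.mulVec w) w + (dotProduct u w)^2 := by
    intro w
    rw [Matrix.add_mulVec, add_dotProduct, hMq]
  have hmemXM : m ∈ SXM := ⟨fam, hfamorth, by
    rw [hm]
    refine Finset.sum_congr rfl fun i _ => ?_
    rw [hXMval, hXfam, hufam]
    ring⟩
  have hlbX : ∀ s ∈ SX, m ≤ s := by
    rintro s ⟨v, hv, rfl⟩
    exact kyFan hX hk1 hk v hv
  have hlbXM : ∀ s ∈ SXM, m ≤ s := by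
    rintro s ⟨v, hv, rfl⟩
    have h1 : ∑ i, dotProduct (X.mulVec (v i)) (v i)
        ≤ ∑ i, dotProduct ((X + M).mulVec (v i)) (v i) := by
      refine Finset.sum_le_sum fun i _ => ?_
      rw [hXMval]
      nlinarith [sq_nonneg (dotProduct u (v i))]
    exact le_trans (kyFan hX hk1 hk v hv) h1
  have hX1 : truncLap k X = m :=
    le_antisymm (csInf_le ⟨m, hlbX⟩ hmemX) (le_csInf ⟨m, hmemX⟩ hlbX)
  have hX2 : truncLap k (X + M) = m :=
    le_antisymm (csInf_le ⟨m, hlbXM⟩ hmemXM) (le_csInf ⟨m, hmemXM⟩ hlbXM)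
  rw [hX1, hX2]

end
end
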